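/- arXiv:1212.6909 — 5 statements merged into one kernel-verified Lean document; each statement's English description precedes it below -/
import Mathlib

section
/- Let G₁, G₂ be graphs, eᵢ = xᵢyᵢ an edge of Gᵢ, and let G₁≡₂G₂ denote the 2-join: delete e₁ and e₂ and add the edges x₁x₂ and y₁y₂. Then for each i ∈ {1,2} there is a cycle-continuous mapping from Gᵢ to G₁≡₂G₂, given by the identity on E(Gᵢ)∖{eᵢ} and sending eᵢ to the new edge x₁x₂. -/
/-- A finite multigraph: a vertex type, an edge type, and two (arbitrarily ordered)
endpoints for each edge.  Loops (`fst e = snd e`) and parallel edges are allowed. -/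
structure Multigraph where
  V : Type
  E : Type
  fst : E → V
  snd : E → V
  [fintypeV : Fintype V]
  [fintypeE : Fintype E]
  [decEqV : DecidableEq V]
  [decEqE : DecidableEq E]

attribute [instance] Multigraph.fintypeV Multigraph.fintypeE Multigraph.decEqV Multigraph.decEqE

namespace Multigraph

/-- The number of times edge `e` is incident with vertex `v` (a loop counts twice). -/
def inc (G : Multigraph) (v : G.V) (e : G.E) : ℕ :=
  (if G.fst e = v then 1 else 0) + (if G.snd e = v then 1 else 0)

/-- A set of edges is a *cycle* if every vertex is incident with an even number of
its edges (loops counted twice). -/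
def IsCycle (G : Multigraph) (C : Finset G.E) : Prop :=
  ∀ v : G.V, Even (∑ e ∈ C, G.inc v e)

/-- The preimage of a finite set of edges under a mapping. -/
def preim {α β : Type} [Fintype α] [DecidableEq β] (f : α → β) (C : Finset β) : Finset α :=
  Finset.univ.filter (fun e => f e ∈ C)

/-- A mapping `f : E(G) → E(H)` is *cycle-continuous* if the preimage of every
cycle of `H` is a cycle of `G`. -/
def CycleContinuous (G H : Multigraph) (f : G.E → H.E) : Prop :=
  ∀ C : Finset H.E, H.IsCycle C → G.IsCycle (preim f C)

/-- The cut `δ(U)`: edges with exactly one endpoint in `U`. -/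
def cutOf (G : Multigraph) (U : Finset G.V) : Finset G.E :=
  Finset.univ.filter (fun e => Xor (G.fst e ∈ U) (G.snd e ∈ U))

/-- A set of edges is a *cut* if it equals `δ(U)` for some vertex set `U`. -/
def IsCut (G : Multigraph) (C : Finset G.E) : Prop :=
  ∃ U : Finset G.V, C = G.cutOf U

/-- The set of edges incident with a vertex `v`. -/
def incidentEdges (G : Multigraph) (v : G.V) : Finset G.E :=
  Finset.univ.filter (fun e => G.fst e = v ∨ G.snd e = v)

/-- The degree of a vertex (loops counted twice). -/
def degree (G : Multigraph) (v : G.V) : ℕ := ∑ e : G.E, G.inc v e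

def Cubic (G : Multigraph) : Prop := ∀ v : G.V, G.degree v = 3

/-- A graph is bridgeless if no cut consists of exactly one edge. -/
def Bridgeless (G : Multigraph) : Prop := ∀ C : Finset G.E, G.IsCut C → C.card ≠ 1

/-- A graph is connected if it has a vertex and every nontrivial vertex set
has a nonempty cut. -/
def Connected (G : Multigraph) : Prop :=
  Nonempty G.V ∧ ∀ U : Finset G.V, U ≠ ∅ → U ≠ Finset.univ → G.cutOf U ≠ ∅

/-- `K₂³`: the graph with two vertices joined by three parallel edges. -/
def K23 : Multigraph where
  V := Bool
  E := Fin 3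
  fst := fun _ => false
  snd := fun _ => true

/-- A snark: a connected cubic bridgeless graph with no cycle-continuous mapping to `K₂³`. -/
def IsSnark (G : Multigraph) : Prop :=
  G.Cubic ∧ G.Connected ∧ G.Bridgeless ∧ ¬ ∃ f : G.E → K23.E, CycleContinuous G K23 f

/-- A proper 3-edge-coloring: distinct edges sharing a vertex get distinct colors. -/
def Proper3EdgeColorable (G : Multigraph) : Prop :=
  ∃ c : G.E → Fin 3, ∀ e e' : G.E, e ≠ e' →
    (∃ v : G.V, 0 < G.inc v e ∧ 0 < G.inc v e') → c e ≠ c e'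

/-- An isomorphism of multigraphs: bijections on vertices and edges preserving
incidence (the two endpoints of an edge may be matched in either order). -/
structure Iso (G H : Multigraph) where
  φ : G.V ≃ H.V
  ε : G.E ≃ H.E
  ends : ∀ e : G.E,
    (φ (G.fst e) = H.fst (ε e) ∧ φ (G.snd e) = H.snd (ε e)) ∨
    (φ (G.fst e) = H.snd (ε e) ∧ φ (G.snd e) = H.fst (ε e))

/-- Edge-transitivity: any edge can be carried to any other by an automorphism. -/
def EdgeTransitive (K : Multigraph) : Prop :=
  ∀ e₁ e₂ : K.E, ∃ σ : Iso K K, σ.ε e₁ = e₂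

/-- Adjacency of vertices. -/
def Adj (G : Multigraph) (u v : G.V) : Prop :=
  ∃ e : G.E, (G.fst e = u ∧ G.snd e = v) ∨ (G.fst e = v ∧ G.snd e = u)

/-- Deleting an edge. -/
def deleteEdge (G : Multigraph) (e : G.E) : Multigraph where
  V := G.V
  E := {e' : G.E // e' ≠ e}
  fst := fun e' => G.fst e'.1
  snd := fun e' => G.snd e'.1

/-- Contracting an edge `e`: its two endpoints are identified (the endpoint `snd e`
is merged into `fst e`), the loop arising from `e` is deleted, all other edges kept. -/
def contract (G : Multigraph) (e : G.E) : Multigraph where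
  V := G.V
  E := {e' : G.E // e' ≠ e}
  fst := fun e' => if G.fst e'.1 = G.snd e then G.fst e else G.fst e'.1
  snd := fun e' => if G.snd e'.1 = G.snd e then G.fst e else G.snd e'.1

/-- The 2-join of `G₁` and `G₂` along edges `e₁`, `e₂`: delete `e₁` and `e₂` and
add two new edges `x₁x₂` (coded `Sum.inr false`) and `y₁y₂` (coded `Sum.inr true`),
where `xᵢ = fst eᵢ` and `yᵢ = snd eᵢ`. -/
def twoJoin (G₁ G₂ : Multigraph) (e₁ : G₁.E) (e₂ : G₂.E) : Multigraph where
  V := G₁.V ⊕ G₂.V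
  E := ({a : G₁.E // a ≠ e₁} ⊕ {b : G₂.E // b ≠ e₂}) ⊕ Bool
  fst := fun e => match e with
    | .inl (.inl a) => .inl (G₁.fst a.1)
    | .inl (.inr b) => .inr (G₂.fst b.1)
    | .inr false => .inl (G₁.fst e₁)
    | .inr true => .inl (G₁.snd e₁)
  snd := fun e => match e with
    | .inl (.inl a) => .inl (G₁.snd a.1)
    | .inl (.inr b) => .inr (G₂.snd b.1)
    | .inr false => .inr (G₂.fst e₂)
    | .inr true => .inr (G₂.snd e₂)

/-- The natural mapping `E(G₁) → E(G₁ ≡₂ G₂)`: identity on `E(G₁) \ {e₁}`,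
and `e₁` goes to the new edge `x₁x₂`. -/
def twoJoinMapL (G₁ G₂ : Multigraph) (e₁ : G₁.E) (e₂ : G₂.E) :
    G₁.E → (twoJoin G₁ G₂ e₁ e₂).E :=
  fun a => if h : a = e₁ then .inr false else .inl (.inl ⟨a, h⟩)

/-- The natural mapping `E(G₂) → E(G₁ ≡₂ G₂)`: identity on `E(G₂) \ {e₂}`,
and `e₂` goes to the new edge `x₁x₂`. -/
def twoJoinMapR (G₁ G₂ : Multigraph) (e₁ : G₁.E) (e₂ : G₂.E) :
    G₂.E → (twoJoin G₁ G₂ e₁ e₂).E :=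
  fun b => if h : b = e₂ then .inr false else .inl (.inr ⟨b, h⟩)

lemma ne_of_inc_eq_zero (G : Multigraph) {u : G.V} {e : G.E} (h : G.inc u e = 0) :
    G.fst e ≠ u ∧ G.snd e ≠ u := by
  unfold inc at h
  constructor <;> intro he <;> simp [he] at h

/-- The endpoint of `e` other than `u`. -/
def otherEnd (G : Multigraph) (u : G.V) (e : G.E) : G.V :=
  if G.fst e = u then G.snd e else G.fst e

lemma otherEnd_ne (G : Multigraph) {u : G.V} {e : G.E} (h : G.inc u e = 1) :
    G.otherEnd u e ≠ u := by
  unfold inc at h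
  unfold otherEnd
  split_ifs with hf
  · intro hs; rw [hf, hs] at h; simp at h
  · exact hf

/-- The 3-join of `G₁` and `G₂`: the degree-3 vertices `u₁`, `u₂` are deleted
(`aᵢ j`, `j = 0,1,2`, are the three edges at `uᵢ`, none of them a loop, and all other
edges avoid `uᵢ`), and three new matching edges (coded `Sum.inr j`) are added, the
`j`-th joining the other endpoint of `a₁ j` to the other endpoint of `a₂ j`. -/
def threeJoin (G₁ G₂ : Multigraph) (u₁ : G₁.V) (u₂ : G₂.V)
    (a₁ : Fin 3 → G₁.E) (a₂ : Fin 3 → G₂.E)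
    (h₁ : ∀ j, G₁.inc u₁ (a₁ j) = 1) (h₂ : ∀ j, G₂.inc u₂ (a₂ j) = 1)
    (hz₁ : ∀ e, (∀ j, e ≠ a₁ j) → G₁.inc u₁ e = 0)
    (hz₂ : ∀ e, (∀ j, e ≠ a₂ j) → G₂.inc u₂ e = 0) : Multigraph where
  V := {v : G₁.V // v ≠ u₁} ⊕ {v : G₂.V // v ≠ u₂}
  E := ({e : G₁.E // ∀ j, e ≠ a₁ j} ⊕ {e : G₂.E // ∀ j, e ≠ a₂ j}) ⊕ Fin 3
  fst := fun e => match e with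
    | .inl (.inl a) => .inl ⟨G₁.fst a.1, (ne_of_inc_eq_zero G₁ (hz₁ a.1 a.2)).1⟩
    | .inl (.inr b) => .inr ⟨G₂.fst b.1, (ne_of_inc_eq_zero G₂ (hz₂ b.1 b.2)).1⟩
    | .inr j => .inl ⟨G₁.otherEnd u₁ (a₁ j), otherEnd_ne G₁ (h₁ j)⟩
  snd := fun e => match e with
    | .inl (.inl a) => .inl ⟨G₁.snd a.1, (ne_of_inc_eq_zero G₁ (hz₁ a.1 a.2)).2⟩
    | .inl (.inr b) => .inr ⟨G₂.snd b.1, (ne_of_inc_eq_zero G₂ (hz₂ b.1 b.2)).2⟩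
    | .inr j => .inr ⟨G₂.otherEnd u₂ (a₂ j), otherEnd_ne G₂ (h₂ j)⟩

/-- The natural mapping `E(G₁) → E(G₁ ≡ G₂)`: identity on edges not incident with
`u₁`, and the edge `a₁ j` at `u₁` goes to the `j`-th added matching edge. -/
noncomputable def threeJoinMapL (G₁ G₂ : Multigraph) (u₁ : G₁.V) (u₂ : G₂.V)
    (a₁ : Fin 3 → G₁.E) (a₂ : Fin 3 → G₂.E)
    (h₁ : ∀ j, G₁.inc u₁ (a₁ j) = 1) (h₂ : ∀ j, G₂.inc u₂ (a₂ j) = 1)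
    (hz₁ : ∀ e, (∀ j, e ≠ a₁ j) → G₁.inc u₁ e = 0)
    (hz₂ : ∀ e, (∀ j, e ≠ a₂ j) → G₂.inc u₂ e = 0) :
    G₁.E → (threeJoin G₁ G₂ u₁ u₂ a₁ a₂ h₁ h₂ hz₁ hz₂).E :=
  fun e => if h : ∀ j, e ≠ a₁ j then .inl (.inl ⟨e, h⟩)
    else .inr (Classical.choose (by push_neg at h; exact h))

/-- The natural mapping `E(G₂) → E(G₁ ≡ G₂)`. -/
noncomputable def threeJoinMapR (G₁ G₂ : Multigraph) (u₁ : G₁.V) (u₂ : G₂.V)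
    (a₁ : Fin 3 → G₁.E) (a₂ : Fin 3 → G₂.E)
    (h₁ : ∀ j, G₁.inc u₁ (a₁ j) = 1) (h₂ : ∀ j, G₂.inc u₂ (a₂ j) = 1)
    (hz₁ : ∀ e, (∀ j, e ≠ a₁ j) → G₁.inc u₁ e = 0)
    (hz₂ : ∀ e, (∀ j, e ≠ a₂ j) → G₂.inc u₂ e = 0) :
    G₂.E → (threeJoin G₁ G₂ u₁ u₂ a₁ a₂ h₁ h₂ hz₁ hz₂).E :=
  fun e => if h : ∀ j, e ≠ a₂ j then .inl (.inr ⟨e, h⟩)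
    else .inr (Classical.choose (by push_neg at h; exact h))

/-- The set of edges of `H` to which an odd number of edges of `C ⊆ E(G)` map. -/
def oddImage (G H : Multigraph) (f : G.E → H.E) (C : Finset G.E) : Finset H.E :=
  Finset.univ.filter (fun e' => Odd ((C.filter (fun e => f e = e')).card))

end Multigraph


open Multigraph Finset in
private lemma zmod2_of_even {n : ℕ} (h : Even n) : ((n : ZMod 2) = 0) := by
  rw [ZMod.natCast_eq_zero_iff]
  exact even_iff_two_dvd.mp h

open Multigraph Finset in
private lemma cycle_sum_zmod2 (H : Multigraph) (C : Finset H.E) (hC : H.IsCycle C)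
    (v : H.V) : (∑ e ∈ C, ((H.inc v e : ℕ) : ZMod 2)) = 0 := by
  have := zmod2_of_even (hC v)
  push_cast at this
  exact this

open Multigraph Finset in
private lemma inc_cast_zmod2 (H : Multigraph) (v : H.V) (e : H.E) :
    ((H.inc v e : ℕ) : ZMod 2)
      = (if H.fst e = v then 1 else 0) + (if H.snd e = v then 1 else 0) := by
  simp [Multigraph.inc, apply_ite (Nat.cast : ℕ → ZMod 2)]

open Multigraph Finset in
private lemma twoJoin_cut (G₁ G₂ : Multigraph) (e₁ : G₁.E) (e₂ : G₂.E)
    (C : Finset (twoJoin G₁ G₂ e₁ e₂).E)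
    (hC : (twoJoin G₁ G₂ e₁ e₂).IsCycle C) :
    ((@ite _ ((Sum.inr false : (twoJoin G₁ G₂ e₁ e₂).E) ∈ C) (Classical.propDecidable _) (1 : ZMod 2) 0)
      + (@ite _ ((Sum.inr true : (twoJoin G₁ G₂ e₁ e₂).E) ∈ C) (Classical.propDecidable _) 1 0)) = 0 := by
  have key : (∑ e ∈ C, ∑ v : G₂.V,
      (((twoJoin G₁ G₂ e₁ e₂).inc (Sum.inr v) e : ℕ) : ZMod 2)) = 0 := by
    rw [Finset.sum_comm]
    exact Finset.sum_eq_zero (fun v _ => cycle_sum_zmod2 _ C hC (Sum.inr v))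
  have inner : ∀ e : (twoJoin G₁ G₂ e₁ e₂).E,
      (∑ v : G₂.V, (((twoJoin G₁ G₂ e₁ e₂).inc (Sum.inr v) e : ℕ) : ZMod 2))
      = (@ite _ (e = Sum.inr false) ((twoJoin G₁ G₂ e₁ e₂).decEqE e _) 1 0)
        + (@ite _ (e = Sum.inr true) ((twoJoin G₁ G₂ e₁ e₂).decEqE e _) 1 0) := by
    rintro ((a | b) | (_ | _)) <;>
      simp [inc_cast_zmod2, twoJoin, Finset.sum_add_distrib, Finset.sum_ite_eq] <;>
      decide
  rw [Finset.sum_congr rfl (fun e _ => inner e), Finset.sum_add_distrib,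
    Finset.sum_ite_eq' C (Sum.inr false), Finset.sum_ite_eq' C (Sum.inr true)] at key
  convert key <;> exact Iff.rfl

open Multigraph in
/-- both natural mappings into a 2-join (identity away from the deleted
edge, the deleted edge going to the new edge `x₁x₂`) are cycle-continuous. -/
theorem twoJoin_inclusions (G₁ G₂ : Multigraph) (e₁ : G₁.E) (e₂ : G₂.E) :
    CycleContinuous G₁ (twoJoin G₁ G₂ e₁ e₂) (twoJoinMapL G₁ G₂ e₁ e₂) ∧
    CycleContinuous G₂ (twoJoin G₁ G₂ e₁ e₂) (twoJoinMapR G₁ G₂ e₁ e₂) := by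
  classical
  constructor
  · intro C hC v
    rw [even_iff_two_dvd, ← ZMod.natCast_eq_zero_iff]
    push_cast
    have hcut := twoJoin_cut G₁ G₂ e₁ e₂ C hC
    have hT := cycle_sum_zmod2 _ C hC (Sum.inl v)
    rw [show C = Finset.univ ∩ C from (Finset.univ_inter C).symm,
      ← Finset.sum_ite_mem] at hT
    have hT2 : (∑ e : ({a : G₁.E // a ≠ e₁} ⊕ {b : G₂.E // b ≠ e₂}) ⊕ Bool,
        @ite _ (e ∈ C) (Finset.decidableMem (α := (twoJoin G₁ G₂ e₁ e₂).E) _ _)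
          (((twoJoin G₁ G₂ e₁ e₂).inc (Sum.inl v) e : ℕ) : ZMod 2) 0) = 0 := hT
    rw [Fintype.sum_sum_type, Fintype.sum_sum_type, Fintype.sum_bool] at hT2
    clear hT
    have incA : ∀ a : {a : G₁.E // a ≠ e₁},
        (((twoJoin G₁ G₂ e₁ e₂).inc (Sum.inl v) (Sum.inl (Sum.inl a)) : ℕ) : ZMod 2)
          = ((G₁.inc v a.1 : ℕ) : ZMod 2) := by
      intro a; simp [inc_cast_zmod2, twoJoin]
    have incB : ∀ b : {b : G₂.E // b ≠ e₂},
        (((twoJoin G₁ G₂ e₁ e₂).inc (Sum.inl v) (Sum.inl (Sum.inr b)) : ℕ) : ZMod 2) = 0 := by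
      intro b; simp [inc_cast_zmod2, twoJoin]
    have incF : (((twoJoin G₁ G₂ e₁ e₂).inc (Sum.inl v) (Sum.inr false) : ℕ) : ZMod 2)
        = (if G₁.fst e₁ = v then 1 else 0) := by
      simp [inc_cast_zmod2, twoJoin]
    have incT : (((twoJoin G₁ G₂ e₁ e₂).inc (Sum.inl v) (Sum.inr true) : ℕ) : ZMod 2)
        = (if G₁.snd e₁ = v then 1 else 0) := by
      simp [inc_cast_zmod2, twoJoin]
    simp only [incA, incB, incF, incT, ite_self, Finset.sum_const_zero, add_zero] at hT2
    rw [Multigraph.preim, Finset.sum_filter,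
      ← Finset.add_sum_erase _ _ (Finset.mem_univ e₁),
      Finset.sum_subtype (p := fun a => a ≠ e₁) (Finset.univ.erase e₁) (by simp)
        (fun a => if twoJoinMapL G₁ G₂ e₁ e₂ a ∈ C then ((G₁.inc v a : ℕ) : ZMod 2) else 0)]
    have hfe : twoJoinMapL G₁ G₂ e₁ e₂ e₁ = Sum.inr false := by
      exact dif_pos rfl
    have hfa : ∀ a : {a : G₁.E // a ≠ e₁},
        twoJoinMapL G₁ G₂ e₁ e₂ a.1 = Sum.inl (Sum.inl a) := by
      intro a; exact dif_neg a.2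
    simp only [hfe, hfa, inc_cast_zmod2] at hT2 ⊢
    dsimp only [twoJoin] at hT2 hcut ⊢
    split_ifs at hT2 hcut ⊢ <;>
      first
        | linear_combination hT2
        | linear_combination hT2 + hcut
        | linear_combination hT2 - hcut
        | linear_combination hcut - hT2
        | linear_combination hcut
        | linear_combination -hcut
        | linear_combination 2 * hcut + hT2
        | ring
  · intro C hC v
    rw [even_iff_two_dvd, ← ZMod.natCast_eq_zero_iff]
    push_cast
    have hcut := twoJoin_cut G₁ G₂ e₁ e₂ C hC
    have hT := cycle_sum_zmod2 _ C hC (Sum.inr v)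
    rw [show C = Finset.univ ∩ C from (Finset.univ_inter C).symm,
      ← Finset.sum_ite_mem] at hT
    have hT2 : (∑ e : ({a : G₁.E // a ≠ e₁} ⊕ {b : G₂.E // b ≠ e₂}) ⊕ Bool,
        @ite _ (e ∈ C) (Finset.decidableMem (α := (twoJoin G₁ G₂ e₁ e₂).E) _ _)
          (((twoJoin G₁ G₂ e₁ e₂).inc (Sum.inr v) e : ℕ) : ZMod 2) 0) = 0 := hT
    rw [Fintype.sum_sum_type, Fintype.sum_sum_type, Fintype.sum_bool] at hT2
    clear hT
    have incA : ∀ a : {a : G₁.E // a ≠ e₁},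
        (((twoJoin G₁ G₂ e₁ e₂).inc (Sum.inr v) (Sum.inl (Sum.inl a)) : ℕ) : ZMod 2) = 0 := by
      intro a; simp [inc_cast_zmod2, twoJoin]
    have incB : ∀ b : {b : G₂.E // b ≠ e₂},
        (((twoJoin G₁ G₂ e₁ e₂).inc (Sum.inr v) (Sum.inl (Sum.inr b)) : ℕ) : ZMod 2)
          = ((G₂.inc v b.1 : ℕ) : ZMod 2) := by
      intro b; simp [inc_cast_zmod2, twoJoin]
    have incF : (((twoJoin G₁ G₂ e₁ e₂).inc (Sum.inr v) (Sum.inr false) : ℕ) : ZMod 2)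
        = (if G₂.fst e₂ = v then 1 else 0) := by
      simp [inc_cast_zmod2, twoJoin]
    have incT : (((twoJoin G₁ G₂ e₁ e₂).inc (Sum.inr v) (Sum.inr true) : ℕ) : ZMod 2)
        = (if G₂.snd e₂ = v then 1 else 0) := by
      simp [inc_cast_zmod2, twoJoin]
    simp only [incA, incB, incF, incT, ite_self, Finset.sum_const_zero, add_zero] at hT2
    rw [Multigraph.preim, Finset.sum_filter,
      ← Finset.add_sum_erase _ _ (Finset.mem_univ e₂),
      Finset.sum_subtype (p := fun b => b ≠ e₂) (Finset.univ.erase e₂) (by simp)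
        (fun b => if twoJoinMapR G₁ G₂ e₁ e₂ b ∈ C then ((G₂.inc v b : ℕ) : ZMod 2) else 0)]
    have hfe : twoJoinMapR G₁ G₂ e₁ e₂ e₂ = Sum.inr false := by
      exact dif_pos rfl
    have hfb : ∀ b : {b : G₂.E // b ≠ e₂},
        twoJoinMapR G₁ G₂ e₁ e₂ b.1 = Sum.inl (Sum.inr b) := by
      intro b; exact dif_neg b.2
    simp only [hfe, hfb, inc_cast_zmod2] at hT2 ⊢
    dsimp only [twoJoin] at hT2 hcut ⊢
    split_ifs at hT2 hcut ⊢ <;>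
      first
        | linear_combination hT2
        | linear_combination hT2 + hcut
        | linear_combination hT2 - hcut
        | linear_combination hcut - hT2
        | linear_combination hcut
        | linear_combination -hcut
        | linear_combination 2 * hcut + hT2
        | ring
end

section
/- Let G₁, G₂ be graphs and K an edge-transitive graph. Then there is a cycle-continuous mapping from the 2-join G₁≡₂G₂ to K if and only if there are cycle-continuous mappings G₁ → K and G₂ → K. -/
namespace TwoJoinAux

open Multigraph Finset

lemma isCycle_iff (G : Multigraph) (C : Finset G.E) :
    G.IsCycle C ↔ ∀ v, (∑ e ∈ C, (G.inc v e : ZMod 2)) = 0 := by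
  unfold Multigraph.IsCycle
  refine forall_congr' fun v => ?_
  rw [← ZMod.natCast_eq_zero_iff_even, Nat.cast_sum]

lemma sum_preim {α β : Type} [Fintype α] [DecidableEq α] [DecidableEq β]
    (f : α → β) (C : Finset β) (F : α → ZMod 2) :
    ∑ e ∈ preim f C, F e = ∑ e : α, if f e ∈ C then F e else 0 := by
  rw [preim, Finset.sum_filter]

lemma mem_preim {α β : Type} [Fintype α] [DecidableEq β]
    (f : α → β) (C : Finset β) (a : α) : a ∈ preim f C ↔ f a ∈ C := by
  simp [preim]

lemma inc_iso {G H : Multigraph} (σ : Iso G H) (v : G.V) (e : G.E) :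
    H.inc (σ.φ v) (σ.ε e) = G.inc v e := by
  unfold Multigraph.inc
  rcases σ.ends e with ⟨h1, h2⟩ | ⟨h1, h2⟩
  · rw [← h1, ← h2]
    simp only [Equiv.apply_eq_iff_eq]
  · rw [← h1, ← h2]
    simp only [Equiv.apply_eq_iff_eq]
    exact add_comm _ _

lemma iso_cc {G H : Multigraph} (σ : Iso G H) : CycleContinuous G H σ.ε := by
  intro C hC
  rw [isCycle_iff] at hC ⊢
  intro v
  rw [sum_preim]
  calc ∑ e : G.E, (if σ.ε e ∈ C then (G.inc v e : ZMod 2) else 0)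
      = ∑ e : G.E, (fun e' => if e' ∈ C then (H.inc (σ.φ v) e' : ZMod 2) else 0) (σ.ε e) := by
        refine Finset.sum_congr rfl fun e _ => ?_
        simp only [inc_iso σ]
    _ = ∑ e' : H.E, (if e' ∈ C then (H.inc (σ.φ v) e' : ZMod 2) else 0) :=
        Equiv.sum_comp σ.ε (fun e' => if e' ∈ C then (H.inc (σ.φ v) e' : ZMod 2) else 0)
    _ = ∑ e' ∈ C, (H.inc (σ.φ v) e' : ZMod 2) := by
        rw [Finset.sum_ite_mem, Finset.univ_inter]
    _ = 0 := hC (σ.φ v)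

lemma cc_comp {G H K : Multigraph} {f : G.E → H.E} {g : H.E → K.E}
    (hf : CycleContinuous G H f) (hg : CycleContinuous H K g) :
    CycleContinuous G K (fun e => g (f e)) := by
  intro C hC
  have h := hf _ (hg C hC)
  have : preim (fun e => g (f e)) C = preim f (preim g C) := by
    ext e; simp [preim]
  rw [this]; exact h

section TJ

variable (G₁ G₂ : Multigraph) (e₁ : G₁.E) (e₂ : G₂.E)

lemma inc_ll (v : G₁.V) (a : {a : G₁.E // a ≠ e₁}) :
    (twoJoin G₁ G₂ e₁ e₂).inc (.inl v) (.inl (.inl a)) = G₁.inc v a.1 := by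
  simp [Multigraph.inc, Multigraph.twoJoin]

lemma inc_lr (v : G₁.V) (b : {b : G₂.E // b ≠ e₂}) :
    (twoJoin G₁ G₂ e₁ e₂).inc (.inl v) (.inl (.inr b)) = 0 := by
  simp [Multigraph.inc, Multigraph.twoJoin]

lemma inc_lf (v : G₁.V) :
    (twoJoin G₁ G₂ e₁ e₂).inc (.inl v) (.inr false) =
      (if G₁.fst e₁ = v then 1 else 0) := by
  simp [Multigraph.inc, Multigraph.twoJoin]

lemma inc_lt (v : G₁.V) :
    (twoJoin G₁ G₂ e₁ e₂).inc (.inl v) (.inr true) =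
      (if G₁.snd e₁ = v then 1 else 0) := by
  simp [Multigraph.inc, Multigraph.twoJoin]

lemma inc_rl (v : G₂.V) (a : {a : G₁.E // a ≠ e₁}) :
    (twoJoin G₁ G₂ e₁ e₂).inc (.inr v) (.inl (.inl a)) = 0 := by
  simp [Multigraph.inc, Multigraph.twoJoin]

lemma inc_rr (v : G₂.V) (b : {b : G₂.E // b ≠ e₂}) :
    (twoJoin G₁ G₂ e₁ e₂).inc (.inr v) (.inl (.inr b)) = G₂.inc v b.1 := by
  simp [Multigraph.inc, Multigraph.twoJoin]

lemma inc_rf (v : G₂.V) :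
    (twoJoin G₁ G₂ e₁ e₂).inc (.inr v) (.inr false) =
      (if G₂.fst e₂ = v then 1 else 0) := by
  simp [Multigraph.inc, Multigraph.twoJoin]

lemma inc_rt (v : G₂.V) :
    (twoJoin G₁ G₂ e₁ e₂).inc (.inr v) (.inr true) =
      (if G₂.snd e₂ = v then 1 else 0) := by
  simp [Multigraph.inc, Multigraph.twoJoin]

end TJ

end TwoJoinAux
namespace TwoJoinAux

open Multigraph Finset

section Main

variable (G₁ G₂ : Multigraph) (e₁ : G₁.E) (e₂ : G₂.E)

/-- The two new edges of a 2-join form an edge cut, so every cycle contains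
either both or neither. -/
lemma ends_mem {C' : Finset (twoJoin G₁ G₂ e₁ e₂).E}
    (hC' : (twoJoin G₁ G₂ e₁ e₂).IsCycle C') :
    ((Sum.inr false : (twoJoin G₁ G₂ e₁ e₂).E) ∈ C') ↔ (Sum.inr true ∈ C') := by
  rw [isCycle_iff] at hC'
  have h0 : (∑ v : G₁.V, ∑ e ∈ C', ((twoJoin G₁ G₂ e₁ e₂).inc (.inl v) e : ZMod 2)) = 0 := by
    exact Finset.sum_eq_zero fun v _ => hC' (.inl v)
  rw [Finset.sum_comm] at h0
  have key : ∀ e ∈ C', (∑ v : G₁.V, ((twoJoin G₁ G₂ e₁ e₂).inc (.inl v) e : ZMod 2)) =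
      ((@ite _ (e = Sum.inr false) (Multigraph.decEqE _ e _) 1 0) +
       (@ite _ (e = Sum.inr true) (Multigraph.decEqE _ e _) 1 0)) := by
    rintro ((a | b) | (_ | _)) _
    · simp only [inc_ll]
      have : ∀ v : G₁.V, (G₁.inc v a.1 : ZMod 2) =
          (if G₁.fst a.1 = v then 1 else 0) + (if G₁.snd a.1 = v then 1 else 0) := by
        intro v; unfold Multigraph.inc; push_cast; split_ifs <;> simp
      simp only [this, Finset.sum_add_distrib, Finset.sum_ite_eq, Finset.mem_univ,
        if_true]
      simp
      decide
    · simp [inc_lr]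
    · simp [inc_lf, Finset.sum_ite_eq]
      rfl
    · simp [inc_lt, Finset.sum_ite_eq]
      erw [if_neg (show ¬ ((Sum.inr true : (twoJoin G₁ G₂ e₁ e₂).E) = Sum.inr false) from fun h => by cases Sum.inr.inj h), if_pos rfl, zero_add]
  rw [Finset.sum_congr rfl key] at h0
  rw [Finset.sum_add_distrib] at h0
  erw [Finset.sum_ite_eq' C', Finset.sum_ite_eq' C'] at h0
  clear key
  split_ifs at h0 with hf ht ht
  · exact iff_of_true hf ht
  · simp_all
  · simp_all
  · exact iff_of_false hf ht

end Main

end TwoJoinAux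
namespace TwoJoinAux

open Multigraph Finset

section Main2

variable (G₁ G₂ : Multigraph) (e₁ : G₁.E) (e₂ : G₂.E)

lemma inc_cast₁ (v : G₁.V) (a : G₁.E) : ((G₁.inc v a : ℕ) : ZMod 2) =
    (if G₁.fst a = v then 1 else 0) + (if G₁.snd a = v then 1 else 0) := by
  unfold Multigraph.inc; split_ifs <;> push_cast <;> ring

lemma inc_cast₂ (v : G₂.V) (b : G₂.E) : ((G₂.inc v b : ℕ) : ZMod 2) =
    (if G₂.fst b = v then 1 else 0) + (if G₂.snd b = v then 1 else 0) := by
  unfold Multigraph.inc; split_ifs <;> push_cast <;> ring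

lemma sum_split (F : (twoJoin G₁ G₂ e₁ e₂).E → ZMod 2) :
    ∑ e, F e = (∑ a : {a : G₁.E // a ≠ e₁}, F (.inl (.inl a)) +
      ∑ b : {b : G₂.E // b ≠ e₂}, F (.inl (.inr b))) + (F (.inr true) + F (.inr false)) :=
  (Fintype.sum_sum_type F).trans (by rw [Fintype.sum_sum_type, Fintype.sum_bool])

lemma forward_left {K : Multigraph} (g : (twoJoin G₁ G₂ e₁ e₂).E → K.E)
    (hg : CycleContinuous (twoJoin G₁ G₂ e₁ e₂) K g) :
    CycleContinuous G₁ K (fun a => g (twoJoinMapL G₁ G₂ e₁ e₂ a)) := by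
  intro C hC
  have hC' := hg C hC
  have hmem : (g (Sum.inr false) ∈ C) ↔ (g (Sum.inr true) ∈ C) := by
    have := ends_mem G₁ G₂ e₁ e₂ hC'
    exact (mem_preim _ _ _).symm.trans (this.trans (mem_preim _ _ _))
  rw [isCycle_iff] at hC' ⊢
  intro v
  have h1 := hC' (Sum.inl v)
  rw [sum_preim, sum_split] at h1
  simp only [inc_ll, inc_lr, inc_lf, inc_lt, Nat.cast_zero, ite_self,
    Finset.sum_const_zero, add_zero] at h1
  rw [sum_preim, ← Finset.add_sum_erase _ _ (Finset.mem_univ e₁),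
    Finset.sum_subtype (p := (· ≠ e₁)) _ (fun x => by simp) _]
  have hmapL : ∀ a : {a : G₁.E // a ≠ e₁},
      twoJoinMapL G₁ G₂ e₁ e₂ a.1 = Sum.inl (Sum.inl a) := by
    intro a; simp [Multigraph.twoJoinMapL, a.2]; rfl
  have hmapLe : twoJoinMapL G₁ G₂ e₁ e₂ e₁ = Sum.inr false := by
    simp [Multigraph.twoJoinMapL]; rfl
  simp only [hmapL, hmapLe]
  simp only [← hmem] at h1
  rw [inc_cast₁]
  by_cases hc : g (Sum.inr false) ∈ C <;> simp only [hc, if_true, if_false] at h1 ⊢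
  · push_cast at h1 ⊢
    linear_combination h1
  · push_cast at h1 ⊢
    linear_combination h1

lemma forward_right {K : Multigraph} (g : (twoJoin G₁ G₂ e₁ e₂).E → K.E)
    (hg : CycleContinuous (twoJoin G₁ G₂ e₁ e₂) K g) :
    CycleContinuous G₂ K (fun b => g (twoJoinMapR G₁ G₂ e₁ e₂ b)) := by
  intro C hC
  have hC' := hg C hC
  have hmem : (g (Sum.inr false) ∈ C) ↔ (g (Sum.inr true) ∈ C) := by
    have := ends_mem G₁ G₂ e₁ e₂ hC'
    exact (mem_preim _ _ _).symm.trans (this.trans (mem_preim _ _ _))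
  rw [isCycle_iff] at hC' ⊢
  intro v
  have h1 := hC' (Sum.inr v)
  rw [sum_preim, sum_split] at h1
  simp only [inc_rl, inc_rr, inc_rf, inc_rt, Nat.cast_zero, ite_self,
    Finset.sum_const_zero, zero_add] at h1
  rw [sum_preim, ← Finset.add_sum_erase _ _ (Finset.mem_univ e₂),
    Finset.sum_subtype (p := (· ≠ e₂)) _ (fun x => by simp) _]
  have hmapR : ∀ b : {b : G₂.E // b ≠ e₂},
      twoJoinMapR G₁ G₂ e₁ e₂ b.1 = Sum.inl (Sum.inr b) := by
    intro b; simp [Multigraph.twoJoinMapR, b.2]; rfl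
  have hmapRe : twoJoinMapR G₁ G₂ e₁ e₂ e₂ = Sum.inr false := by
    simp [Multigraph.twoJoinMapR]; rfl
  simp only [hmapR, hmapRe]
  simp only [← hmem] at h1
  rw [inc_cast₂]
  by_cases hc : g (Sum.inr false) ∈ C <;> simp only [hc, if_true, if_false] at h1 ⊢
  · push_cast at h1 ⊢
    linear_combination h1
  · push_cast at h1 ⊢
    linear_combination h1

lemma backward {K : Multigraph} (g₁ : G₁.E → K.E) (hg₁ : CycleContinuous G₁ K g₁)
    (g₂ : G₂.E → K.E) (hg₂ : CycleContinuous G₂ K g₂) (heq : g₂ e₂ = g₁ e₁) :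
    CycleContinuous (twoJoin G₁ G₂ e₁ e₂) K
      (fun e => match e with
        | .inl (.inl a) => g₁ a.1
        | .inl (.inr b) => g₂ b.1
        | .inr _ => g₁ e₁) := by
  intro C hC
  rw [isCycle_iff]
  rintro (v | v)
  · have h1 := (isCycle_iff _ _).1 (hg₁ C hC) v
    rw [sum_preim] at h1
    rw [← Finset.add_sum_erase _ _ (Finset.mem_univ e₁),
      Finset.sum_subtype (p := (· ≠ e₁)) _ (fun x => by simp) _] at h1
    rw [sum_preim, sum_split]
    simp only [inc_ll, inc_lr, inc_lf, inc_lt, Nat.cast_zero, ite_self,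
      Finset.sum_const_zero, add_zero]
    rw [inc_cast₁] at h1
    by_cases hc : g₁ e₁ ∈ C <;> simp only [hc, if_true, if_false] at h1 ⊢
    · push_cast at h1 ⊢
      linear_combination h1
    · push_cast at h1 ⊢
      linear_combination h1
  · have h1 := (isCycle_iff _ _).1 (hg₂ C hC) v
    rw [sum_preim] at h1
    rw [← Finset.add_sum_erase _ _ (Finset.mem_univ e₂),
      Finset.sum_subtype (p := (· ≠ e₂)) _ (fun x => by simp) _] at h1
    rw [sum_preim, sum_split]
    simp only [inc_rl, inc_rr, inc_rf, inc_rt, Nat.cast_zero, ite_self,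
      Finset.sum_const_zero, zero_add]
    rw [inc_cast₂, heq] at h1
    by_cases hc : g₁ e₁ ∈ C <;> simp only [hc, if_true, if_false] at h1 ⊢
    · push_cast at h1 ⊢
      linear_combination h1
    · push_cast at h1 ⊢
      linear_combination h1

end Main2

end TwoJoinAux

open Multigraph in
/-- for an edge-transitive `K`, the 2-join maps cycle-continuously to `K`
iff both factors do. -/
theorem twoJoin_proj (G₁ G₂ K : Multigraph) (e₁ : G₁.E) (e₂ : G₂.E)
    (hK : EdgeTransitive K) :
    (∃ g : (twoJoin G₁ G₂ e₁ e₂).E → K.E, CycleContinuous (twoJoin G₁ G₂ e₁ e₂) K g) ↔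
      (∃ g₁ : G₁.E → K.E, CycleContinuous G₁ K g₁) ∧
      (∃ g₂ : G₂.E → K.E, CycleContinuous G₂ K g₂) := by
  constructor
  · rintro ⟨g, hg⟩
    exact ⟨⟨_, TwoJoinAux.forward_left G₁ G₂ e₁ e₂ g hg⟩,
           ⟨_, TwoJoinAux.forward_right G₁ G₂ e₁ e₂ g hg⟩⟩
  · rintro ⟨⟨g₁, hg₁⟩, ⟨g₂, hg₂⟩⟩
    obtain ⟨σ, hσ⟩ := hK (g₂ e₂) (g₁ e₁)
    have hg₂' : CycleContinuous G₂ K (fun b => σ.ε (g₂ b)) :=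
      TwoJoinAux.cc_comp hg₂ (TwoJoinAux.iso_cc σ)
    exact ⟨_, TwoJoinAux.backward G₁ G₂ e₁ e₂ g₁ hg₁ _ hg₂' hσ⟩
end

section
/- Let G₁, G₂ be graphs with chosen vertices u₁, u₂ of degree 3, and let G₁≡G₂ be a 3-join: delete uᵢ from each Gᵢ and add a perfect matching between the former neighbors of u₁ and the former neighbors of u₂. Then for each i ∈ {1,2}, the natural mapping E(Gᵢ) → E(G₁≡G₂) (identity on edges not incident with uᵢ, and sending each edge uᵢw to the added matching edge at w) is cycle-continuous. -/
section AuxLemmas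
open Multigraph Finset

private lemma even_sum' {ι : Type*} (s : Finset ι) (f : ι → ℕ)
    (h : ∀ i ∈ s, Even (f i)) : Even (∑ i ∈ s, f i) := by
  classical
  induction s using Finset.induction with
  | empty => simp
  | insert x s hx ih =>
    rw [Finset.sum_insert hx]
    exact (h _ (Finset.mem_insert_self _ _)).add
      (ih fun i hi => h i (Finset.mem_insert_of_mem hi))

private lemma inc_eq_of_ne {G : Multigraph} {u v : G.V} {e : G.E}
    (h : G.inc u e = 1) (hv : v ≠ u) :
    G.inc v e = if G.otherEnd u e = v then 1 else 0 := by
  unfold Multigraph.inc Multigraph.otherEnd at *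
  split_ifs at * <;> simp_all

private lemma sum_inc_preim {G H : Multigraph} (f : G.E → H.E)
    (hf : Function.Injective f) (C : Finset H.E) (v : G.V) (w : H.V)
    (h1 : ∀ e, G.inc v e = H.inc w (f e))
    (h2 : ∀ E, (∀ e, f e ≠ E) → H.inc w E = 0) :
    ∑ e ∈ preim f C, G.inc v e = ∑ E ∈ C, H.inc w E := by
  classical
  have himg : (preim f C).image f ⊆ C := by
    intro E hE
    obtain ⟨e, he, rfl⟩ := Finset.mem_image.mp hE
    simpa [preim] using (Finset.mem_filter.mp he).2
  have e1 : ∑ e ∈ preim f C, G.inc v e = ∑ e ∈ preim f C, H.inc w (f e) :=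
    Finset.sum_congr rfl fun e _ => h1 e
  have e2 : ∑ e ∈ preim f C, H.inc w (f e)
      = ∑ E ∈ (preim f C).image f, H.inc w E :=
    (Finset.sum_image fun a _ b _ hab => hf hab).symm
  rw [e1, e2]
  apply Finset.sum_subset himg
  intro E hEC hE
  apply h2
  intro e he
  apply hE
  exact Finset.mem_image.mpr ⟨e, Finset.mem_filter.mpr ⟨Finset.mem_univ e, he ▸ hEC⟩, he⟩

private lemma even_count (H : Multigraph) {W : Type} [Fintype W]
    (ι : W → H.V) (g : Fin 3 → H.E) (hg : Function.Injective g)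
    (hparity : ∀ E : H.E, (∀ j, E ≠ g j) → Even (∑ w : W, H.inc (ι w) E))
    (hodd : ∀ j, ∑ w : W, H.inc (ι w) (g j) = 1)
    (C : Finset H.E) (hC : H.IsCycle C) :
    Even (∑ j : Fin 3, if g j ∈ C then 1 else 0) := by
  classical
  have hT : Even (∑ w : W, ∑ E ∈ C, H.inc (ι w) E) :=
    even_sum' _ _ fun w _ => hC (ι w)
  rw [Finset.sum_comm] at hT
  -- split C into g-part and the rest
  rw [← Finset.sum_filter_add_sum_filter_not C (fun E => ∃ j, E = g j)] at hT
  have hrest : Even (∑ E ∈ C.filter (fun E => ¬∃ j, E = g j), ∑ w : W, H.inc (ι w) E) := by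
    apply even_sum'
    intro E hE
    have := (Finset.mem_filter.mp hE).2
    push_neg at this
    exact hparity E this
  have hmain : Even (∑ E ∈ C.filter (fun E => ∃ j, E = g j), ∑ w : W, H.inc (ι w) E) := by
    rcases hT with ⟨k, hk⟩
    rcases hrest with ⟨m, hm⟩
    refine ⟨k - m, ?_⟩
    omega
  have h1 : ∑ E ∈ C.filter (fun E => ∃ j, E = g j), ∑ w : W, H.inc (ι w) E
      = (C.filter (fun E => ∃ j, E = g j)).card := by
    rw [Finset.card_eq_sum_ones]
    apply Finset.sum_congr rfl
    intro E hE
    obtain ⟨j, rfl⟩ := (Finset.mem_filter.mp hE).2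
    exact hodd j
  have h2 : C.filter (fun E => ∃ j, E = g j)
      = (Finset.univ.filter (fun j => g j ∈ C)).image g := by
    ext E
    simp only [Finset.mem_filter, Finset.mem_image, Finset.mem_univ, true_and]
    constructor
    · rintro ⟨hEC, j, rfl⟩; exact ⟨j, hEC, rfl⟩
    · rintro ⟨j, hjC, rfl⟩; exact ⟨hjC, j, rfl⟩
  have h3 : ∑ j : Fin 3, (if g j ∈ C then 1 else 0)
      = (Finset.univ.filter (fun j => g j ∈ C)).card := by
    rw [Finset.card_filter]
  rw [h3, ← Finset.card_image_of_injective _ hg, ← h2, ← h1]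
  exact hmain

end AuxLemmas


open Multigraph in
private lemma threeJoin_ccL (G₁ G₂ : Multigraph) (u₁ : G₁.V) (u₂ : G₂.V)
    (a₁ : Fin 3 → G₁.E) (a₂ : Fin 3 → G₂.E)
    (ha₁ : Function.Injective a₁)
    (h₁ : ∀ j, G₁.inc u₁ (a₁ j) = 1) (h₂ : ∀ j, G₂.inc u₂ (a₂ j) = 1)
    (hz₁ : ∀ e, (∀ j, e ≠ a₁ j) → G₁.inc u₁ e = 0)
    (hz₂ : ∀ e, (∀ j, e ≠ a₂ j) → G₂.inc u₂ e = 0) :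
    CycleContinuous G₁ (threeJoin G₁ G₂ u₁ u₂ a₁ a₂ h₁ h₂ hz₁ hz₂)
      (threeJoinMapL G₁ G₂ u₁ u₂ a₁ a₂ h₁ h₂ hz₁ hz₂) := by
  classical
  set F := threeJoinMapL G₁ G₂ u₁ u₂ a₁ a₂ h₁ h₂ hz₁ hz₂ with hF
  have hfo : ∀ (e : G₁.E) (he : ∀ j, e ≠ a₁ j), F e = Sum.inl (Sum.inl ⟨e, he⟩) := by
    intro e he
    simp only [hF, threeJoinMapL, dif_pos he]
    exact dif_pos he
  have hfa : ∀ j, F (a₁ j) = Sum.inr j := by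
    intro j
    have hne : ¬ ∀ j', a₁ j ≠ a₁ j' := by push_neg; exact ⟨j, rfl⟩
    simp only [hF, threeJoinMapL, dif_neg hne]
    refine (dif_neg hne).trans ?_
    have hex : ∃ j', a₁ j = a₁ j' := ⟨j, rfl⟩
    have hspec := Classical.choose_spec hex
    exact congrArg Sum.inr (ha₁ hspec).symm
  have hFinj : Function.Injective F := by
    intro a b hab
    by_cases hA : ∀ j, a ≠ a₁ j <;> by_cases hB : ∀ j, b ≠ a₁ j
    · rw [hfo a hA, hfo b hB] at hab
      injection hab with t
      injection t with t2
      exact congrArg Subtype.val t2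
    · push_neg at hB; obtain ⟨j, rfl⟩ := hB
      rw [hfo a hA, hfa j] at hab; injection hab
    · push_neg at hA; obtain ⟨j, rfl⟩ := hA
      rw [hfa j, hfo b hB] at hab; injection hab
    · push_neg at hA hB; obtain ⟨j, rfl⟩ := hA; obtain ⟨j', rfl⟩ := hB
      rw [hfa j, hfa j'] at hab
      injection hab with t
      rw [t]
  intro C hC v
  by_cases hv : v = u₁
  · rw [hv]
    have hsum : ∑ e ∈ preim F C, G₁.inc u₁ e
        = ∑ j : Fin 3,
            (if (Sum.inr j : (threeJoin G₁ G₂ u₁ u₂ a₁ a₂ h₁ h₂ hz₁ hz₂).E) ∈ C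
             then 1 else 0) := by
      rw [preim, Finset.sum_filter]
      have e1 : ∑ e : G₁.E, (if F e ∈ C then G₁.inc u₁ e else 0)
          = ∑ e ∈ Finset.univ.image a₁, (if F e ∈ C then G₁.inc u₁ e else 0) := by
        symm
        apply Finset.sum_subset (Finset.subset_univ _)
        intro e _ he
        have hz : G₁.inc u₁ e = 0 :=
          hz₁ e (fun j hj => he (Finset.mem_image.mpr ⟨j, Finset.mem_univ j, hj.symm⟩))
        simp [hz]
      rw [e1, Finset.sum_image (fun x _ y _ h => ha₁ h)]
      apply Finset.sum_congr rfl
      intro j _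
      rw [hfa j, h₁ j]
      congr
    rw [hsum]
    convert even_count _ (fun w : {x : G₂.V // x ≠ u₂} => Sum.inr w)
      (fun j => Sum.inr j) (fun x y h => by injection h) ?_ ?_ C hC
    · exact Iff.rfl
    · intro E hE
      obtain (a | b) | j := E
      · simp [Multigraph.inc, threeJoin]
      · simp [Multigraph.inc, threeJoin, Finset.sum_add_distrib]
      · exact absurd rfl (hE j)
    · intro j
      simp [Multigraph.inc, threeJoin]
  · rw [sum_inc_preim F hFinj C v (Sum.inl ⟨v, hv⟩) ?_ ?_]
    · exact hC _
    · intro e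
      by_cases he : ∀ j, e ≠ a₁ j
      · rw [hfo e he]
        simp [Multigraph.inc, threeJoin, Subtype.ext_iff]
      · push_neg at he; obtain ⟨j, rfl⟩ := he
        rw [hfa j, inc_eq_of_ne (h₁ j) hv]
        simp [Multigraph.inc, threeJoin, Subtype.ext_iff]
    · intro E hE
      obtain (a | b) | j := E
      · exact absurd (hfo a.1 a.2) (hE a.1)
      · simp [Multigraph.inc, threeJoin]
      · exact absurd (hfa j) (hE (a₁ j))


open Multigraph in
private lemma threeJoin_ccR (G₁ G₂ : Multigraph) (u₁ : G₁.V) (u₂ : G₂.V)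
    (a₁ : Fin 3 → G₁.E) (a₂ : Fin 3 → G₂.E)
    (ha₂ : Function.Injective a₂)
    (h₁ : ∀ j, G₁.inc u₁ (a₁ j) = 1) (h₂ : ∀ j, G₂.inc u₂ (a₂ j) = 1)
    (hz₁ : ∀ e, (∀ j, e ≠ a₁ j) → G₁.inc u₁ e = 0)
    (hz₂ : ∀ e, (∀ j, e ≠ a₂ j) → G₂.inc u₂ e = 0) :
    CycleContinuous G₂ (threeJoin G₁ G₂ u₁ u₂ a₁ a₂ h₁ h₂ hz₁ hz₂)
      (threeJoinMapR G₁ G₂ u₁ u₂ a₁ a₂ h₁ h₂ hz₁ hz₂) := by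
  classical
  set F := threeJoinMapR G₁ G₂ u₁ u₂ a₁ a₂ h₁ h₂ hz₁ hz₂ with hF
  have hfo : ∀ (e : G₂.E) (he : ∀ j, e ≠ a₂ j), F e = Sum.inl (Sum.inr ⟨e, he⟩) := by
    intro e he
    simp only [hF, threeJoinMapR, dif_pos he]
    exact dif_pos he
  have hfa : ∀ j, F (a₂ j) = Sum.inr j := by
    intro j
    have hne : ¬ ∀ j', a₂ j ≠ a₂ j' := by push_neg; exact ⟨j, rfl⟩
    simp only [hF, threeJoinMapR, dif_neg hne]
    refine (dif_neg hne).trans ?_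
    have hex : ∃ j', a₂ j = a₂ j' := ⟨j, rfl⟩
    have hspec := Classical.choose_spec hex
    exact congrArg Sum.inr (ha₂ hspec).symm
  have hFinj : Function.Injective F := by
    intro a b hab
    by_cases hA : ∀ j, a ≠ a₂ j <;> by_cases hB : ∀ j, b ≠ a₂ j
    · rw [hfo a hA, hfo b hB] at hab
      injection hab with t
      injection t with t2
      exact congrArg Subtype.val t2
    · push_neg at hB; obtain ⟨j, rfl⟩ := hB
      rw [hfo a hA, hfa j] at hab; injection hab
    · push_neg at hA; obtain ⟨j, rfl⟩ := hA
      rw [hfa j, hfo b hB] at hab; injection hab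
    · push_neg at hA hB; obtain ⟨j, rfl⟩ := hA; obtain ⟨j', rfl⟩ := hB
      rw [hfa j, hfa j'] at hab
      injection hab with t
      rw [t]
  intro C hC v
  by_cases hv : v = u₂
  · rw [hv]
    have hsum : ∑ e ∈ preim F C, G₂.inc u₂ e
        = ∑ j : Fin 3,
            (if (Sum.inr j : (threeJoin G₁ G₂ u₁ u₂ a₁ a₂ h₁ h₂ hz₁ hz₂).E) ∈ C
             then 1 else 0) := by
      rw [preim, Finset.sum_filter]
      have e1 : ∑ e : G₂.E, (if F e ∈ C then G₂.inc u₂ e else 0)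
          = ∑ e ∈ Finset.univ.image a₂, (if F e ∈ C then G₂.inc u₂ e else 0) := by
        symm
        apply Finset.sum_subset (Finset.subset_univ _)
        intro e _ he
        have hz : G₂.inc u₂ e = 0 :=
          hz₂ e (fun j hj => he (Finset.mem_image.mpr ⟨j, Finset.mem_univ j, hj.symm⟩))
        simp [hz]
      rw [e1, Finset.sum_image (fun x _ y _ h => ha₂ h)]
      apply Finset.sum_congr rfl
      intro j _
      rw [hfa j, h₂ j]
      congr
    rw [hsum]
    convert even_count _ (fun w : {x : G₁.V // x ≠ u₁} => Sum.inl w)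
      (fun j => Sum.inr j) (fun x y h => by injection h) ?_ ?_ C hC
    · exact Iff.rfl
    · intro E hE
      obtain (a | b) | j := E
      · simp [Multigraph.inc, threeJoin, Finset.sum_add_distrib]
      · simp [Multigraph.inc, threeJoin]
      · exact absurd rfl (hE j)
    · intro j
      simp [Multigraph.inc, threeJoin]
  · rw [sum_inc_preim F hFinj C v (Sum.inr ⟨v, hv⟩) ?_ ?_]
    · exact hC _
    · intro e
      by_cases he : ∀ j, e ≠ a₂ j
      · rw [hfo e he]
        simp [Multigraph.inc, threeJoin, Subtype.ext_iff]
      · push_neg at he; obtain ⟨j, rfl⟩ := he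
        rw [hfa j, inc_eq_of_ne (h₂ j) hv]
        simp [Multigraph.inc, threeJoin, Subtype.ext_iff]
    · intro E hE
      obtain (a | b) | j := E
      · simp [Multigraph.inc, threeJoin]
      · exact absurd (hfo b.1 b.2) (hE b.1)
      · exact absurd (hfa j) (hE (a₂ j))

open Multigraph in
/-- both natural mappings into a 3-join are cycle-continuous. -/
theorem threeJoin_inclusions (G₁ G₂ : Multigraph) (u₁ : G₁.V) (u₂ : G₂.V)
    (a₁ : Fin 3 → G₁.E) (a₂ : Fin 3 → G₂.E)
    (ha₁ : Function.Injective a₁) (ha₂ : Function.Injective a₂)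
    (h₁ : ∀ j, G₁.inc u₁ (a₁ j) = 1) (h₂ : ∀ j, G₂.inc u₂ (a₂ j) = 1)
    (hz₁ : ∀ e, (∀ j, e ≠ a₁ j) → G₁.inc u₁ e = 0)
    (hz₂ : ∀ e, (∀ j, e ≠ a₂ j) → G₂.inc u₂ e = 0)
    (hn₁ : Function.Injective (fun j => G₁.otherEnd u₁ (a₁ j)))
    (hn₂ : Function.Injective (fun j => G₂.otherEnd u₂ (a₂ j))) :
    CycleContinuous G₁ (threeJoin G₁ G₂ u₁ u₂ a₁ a₂ h₁ h₂ hz₁ hz₂)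
      (threeJoinMapL G₁ G₂ u₁ u₂ a₁ a₂ h₁ h₂ hz₁ hz₂) ∧
    CycleContinuous G₂ (threeJoin G₁ G₂ u₁ u₂ a₁ a₂ h₁ h₂ hz₁ hz₂)
      (threeJoinMapR G₁ G₂ u₁ u₂ a₁ a₂ h₁ h₂ hz₁ hz₂) := by
  exact ⟨threeJoin_ccL G₁ G₂ u₁ u₂ a₁ a₂ ha₁ h₁ h₂ hz₁ hz₂,
    threeJoin_ccR G₁ G₂ u₁ u₂ a₁ a₂ ha₂ h₁ h₂ hz₁ hz₂⟩
end

section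
/- Let G₁, G₂ be snarks that are cc-incomparable (no cycle-continuous mapping exists in either direction between them). Then for each i ∈ {1,2}, there is no cycle-continuous mapping from the 3-join G₁≡G₂ to Gᵢ. -/
namespace Multigraph

lemma cc_comp {G H K : Multigraph} {f : G.E → H.E} {g : H.E → K.E}
    (hf : CycleContinuous G H f) (hg : CycleContinuous H K g) :
    CycleContinuous G K (g ∘ f) := by
  intro C hC
  have h : preim (g ∘ f) C = preim f (preim g C) := by
    ext e; simp [preim]
  rw [h]
  exact hf _ (hg C hC)

lemma inc_other {G : Multigraph} {u v : G.V} {e : G.E} (hv : v ≠ u)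
    (he : G.inc u e = 1) :
    G.inc v e = if G.otherEnd u e = v then 1 else 0 := by
  unfold inc otherEnd at *
  split_ifs at * <;> simp_all

lemma sum_mem_eq_sum_ite {α β : Type*} [Fintype α] [DecidableEq α] [AddCommMonoid β]
    (C : Finset α) (f : α → β) :
    ∑ e ∈ C, f e = ∑ e : α, if e ∈ C then f e else 0 := by
  rw [Finset.sum_ite_mem, Finset.univ_inter]

section JT

variable (G₁ G₂ : Multigraph) (u₁ : G₁.V) (u₂ : G₂.V)
    (a₁ : Fin 3 → G₁.E) (a₂ : Fin 3 → G₂.E)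
    (h₁ : ∀ j, G₁.inc u₁ (a₁ j) = 1) (h₂ : ∀ j, G₂.inc u₂ (a₂ j) = 1)
    (hz₁ : ∀ e, (∀ j, e ≠ a₁ j) → G₁.inc u₁ e = 0)
    (hz₂ : ∀ e, (∀ j, e ≠ a₂ j) → G₂.inc u₂ e = 0)

local notation "J" => threeJoin G₁ G₂ u₁ u₂ a₁ a₂ h₁ h₂ hz₁ hz₂

lemma sum_decomp (F : (J).E → ℕ) : ∑ x : (J).E, F x =
    ((∑ a : {e : G₁.E // ∀ j, e ≠ a₁ j}, F (Sum.inl (Sum.inl a))) +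
     (∑ b : {e : G₂.E // ∀ j, e ≠ a₂ j}, F (Sum.inl (Sum.inr b)))) +
    ∑ j : Fin 3, F (Sum.inr j) :=
  (Fintype.sum_sum_type _).trans (by rw [Fintype.sum_sum_type])

lemma matching_even (C : Finset (J).E) (hC : (J).IsCycle C) :
    Even (∑ j : Fin 3, if (id (Sum.inr j) : (J).E) ∈ C then 1 else 0) := by
  have T : Even (∑ w : {v : G₁.V // v ≠ u₁}, ∑ e : (J).E,
      if e ∈ C then (J).inc (Sum.inl w) e else 0) := by
    apply Finset.even_sum
    intro w _
    rw [← sum_mem_eq_sum_ite]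
    exact hC (Sum.inl w)
  rw [Finset.sum_comm] at T
  have rec1 : ∀ e : (J).E, (∑ w : {v : G₁.V // v ≠ u₁},
      if e ∈ C then (J).inc (Sum.inl w) e else 0) =
      if e ∈ C then (∑ w : {v : G₁.V // v ≠ u₁}, (J).inc (Sum.inl w) e) else 0 := by
    intro e; split_ifs <;> simp
  simp only [rec1] at T
  rw [sum_decomp G₁ G₂ u₁ u₂ a₁ a₂ h₁ h₂ hz₁ hz₂] at T
  have hll : ∀ a : {e : G₁.E // ∀ j, e ≠ a₁ j},
      (∑ w : {v : G₁.V // v ≠ u₁}, (J).inc (Sum.inl w) (Sum.inl (Sum.inl a))) = 2 := by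
    intro a
    simp [inc, threeJoin, Finset.sum_add_distrib, Finset.sum_ite_eq]
  have hlr : ∀ b : {e : G₂.E // ∀ j, e ≠ a₂ j},
      (∑ w : {v : G₁.V // v ≠ u₁}, (J).inc (Sum.inl w) (Sum.inl (Sum.inr b))) = 0 := by
    intro b
    simp [inc, threeJoin]
  have hm : ∀ j : Fin 3,
      (∑ w : {v : G₁.V // v ≠ u₁}, (J).inc (Sum.inl w) (Sum.inr j)) = 1 := by
    intro j
    simp [inc, threeJoin, Finset.sum_ite_eq]
  simp only [hll, hlr, hm, ite_self, Finset.sum_const_zero, add_zero] at T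
  rw [Nat.even_add] at T
  exact T.mp (Finset.even_sum _ (fun a _ => by split_ifs <;> simp))

lemma mapL_cc (ha₁ : Function.Injective a₁) :
    CycleContinuous G₁ (J) (threeJoinMapL G₁ G₂ u₁ u₂ a₁ a₂ h₁ h₂ hz₁ hz₂) := by
  intro C hC v
  set f := threeJoinMapL G₁ G₂ u₁ u₂ a₁ a₂ h₁ h₂ hz₁ hz₂ with hfdef
  have hf1 : ∀ (e : G₁.E) (h : ∀ j, e ≠ a₁ j), f e = Sum.inl (Sum.inl ⟨e, h⟩) := by
    intro e h; simp only [hfdef, threeJoinMapL, dif_pos h]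
    exact dif_pos h
  have hf2 : ∀ j, f (a₁ j) = Sum.inr j := by
    intro j
    have hne : ¬ ∀ j', a₁ j ≠ a₁ j' := by push_neg; exact ⟨j, rfl⟩
    simp only [hfdef, threeJoinMapL, dif_neg hne]
    refine (dif_neg hne).trans ?_
    congr 1
    exact (ha₁ (Classical.choose_spec (show ∃ j', a₁ j = a₁ j' from ⟨j, rfl⟩))).symm
  show Even (∑ e ∈ preim f C, G₁.inc v e)
  rw [preim, Finset.sum_filter,
    ← Finset.sum_filter_add_sum_filter_not Finset.univ (fun e => ∀ j, e ≠ a₁ j)]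
  have himg : Finset.univ.filter (fun e : G₁.E => ¬ ∀ j, e ≠ a₁ j) = Finset.univ.image a₁ := by
    ext e
    simp only [Finset.mem_filter, Finset.mem_univ, true_and, Finset.mem_image, not_forall,
      ne_eq, not_not]
    exact ⟨fun ⟨j, hj⟩ => ⟨j, hj.symm⟩, fun ⟨j, hj⟩ => ⟨j, hj.symm⟩⟩
  rw [himg, Finset.sum_image (fun x _ y _ h => ha₁ h)]
  by_cases hv : v = u₁
  · rw [hv]
    have hS1 : (∑ e ∈ Finset.univ.filter (fun e : G₁.E => ∀ j, e ≠ a₁ j),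
        (if f e ∈ C then G₁.inc u₁ e else 0)) = 0 := by
      apply Finset.sum_eq_zero
      intro e he
      rw [Finset.mem_filter] at he
      rw [hz₁ e he.2]
      simp
    rw [hS1, zero_add]
    have ht : ∀ j : Fin 3, (if f (a₁ j) ∈ C then G₁.inc u₁ (a₁ j) else 0) =
        (if (id (Sum.inr j) : (J).E) ∈ C then 1 else 0) := by
      intro j; rw [hf2 j, h₁ j]
      rfl
    simp only [ht]
    exact matching_even G₁ G₂ u₁ u₂ a₁ a₂ h₁ h₂ hz₁ hz₂ C hC
  · have hC' := hC (Sum.inl ⟨v, hv⟩)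
    rw [sum_mem_eq_sum_ite, sum_decomp G₁ G₂ u₁ u₂ a₁ a₂ h₁ h₂ hz₁ hz₂] at hC'
    have hB : ∀ b : {e : G₂.E // ∀ j, e ≠ a₂ j},
        (J).inc (Sum.inl ⟨v, hv⟩) (Sum.inl (Sum.inr b)) = 0 := by
      intro b; simp [inc, threeJoin]
    have hM : ∀ j : Fin 3, (J).inc (Sum.inl ⟨v, hv⟩) (Sum.inr j) =
        if G₁.otherEnd u₁ (a₁ j) = v then 1 else 0 := by
      intro j; simp [inc, threeJoin, Subtype.ext_iff]
    have hA : ∀ a : {e : G₁.E // ∀ j, e ≠ a₁ j},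
        (J).inc (Sum.inl ⟨v, hv⟩) (Sum.inl (Sum.inl a)) = G₁.inc v a.1 := by
      intro a; simp [inc, threeJoin, Subtype.ext_iff]
    simp only [hB, hM, hA, ite_self, Finset.sum_const_zero, add_zero] at hC'
    have e1 : (∑ e ∈ Finset.univ.filter (fun e : G₁.E => ∀ j, e ≠ a₁ j),
        (if f e ∈ C then G₁.inc v e else 0)) =
        ∑ a : {e : G₁.E // ∀ j, e ≠ a₁ j},
          (if (id (Sum.inl (Sum.inl a)) : (J).E) ∈ C then G₁.inc v a.1 else 0) := by
      rw [Finset.sum_subtype (p := fun e : G₁.E => ∀ j, e ≠ a₁ j)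
        (Finset.univ.filter (fun e : G₁.E => ∀ j, e ≠ a₁ j))
        (by intro x; simp) (fun e => if f e ∈ C then G₁.inc v e else 0)]
      apply Finset.sum_congr rfl
      intro a _
      rw [hf1 a.1 a.2]
      rfl
    have e2 : ∀ j : Fin 3, (if f (a₁ j) ∈ C then G₁.inc v (a₁ j) else 0) =
        (if (id (Sum.inr j) : (J).E) ∈ C then
          (if G₁.otherEnd u₁ (a₁ j) = v then 1 else 0) else 0) := by
      intro j
      rw [hf2 j, inc_other hv (h₁ j)]
      rfl
    rw [e1]
    simp only [e2]
    exact hC'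

lemma mapR_cc (ha₂ : Function.Injective a₂) :
    CycleContinuous G₂ (J) (threeJoinMapR G₁ G₂ u₁ u₂ a₁ a₂ h₁ h₂ hz₁ hz₂) := by
  intro C hC v
  set f := threeJoinMapR G₁ G₂ u₁ u₂ a₁ a₂ h₁ h₂ hz₁ hz₂ with hfdef
  have hf1 : ∀ (e : G₂.E) (h : ∀ j, e ≠ a₂ j), f e = Sum.inl (Sum.inr ⟨e, h⟩) := by
    intro e h; simp only [hfdef, threeJoinMapR, dif_pos h]
    exact dif_pos h
  have hf2 : ∀ j, f (a₂ j) = Sum.inr j := by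
    intro j
    have hne : ¬ ∀ j', a₂ j ≠ a₂ j' := by push_neg; exact ⟨j, rfl⟩
    simp only [hfdef, threeJoinMapR, dif_neg hne]
    refine (dif_neg hne).trans ?_
    congr 1
    exact (ha₂ (Classical.choose_spec (show ∃ j', a₂ j = a₂ j' from ⟨j, rfl⟩))).symm
  show Even (∑ e ∈ preim f C, G₂.inc v e)
  rw [preim, Finset.sum_filter,
    ← Finset.sum_filter_add_sum_filter_not Finset.univ (fun e => ∀ j, e ≠ a₂ j)]
  have himg : Finset.univ.filter (fun e : G₂.E => ¬ ∀ j, e ≠ a₂ j) = Finset.univ.image a₂ := by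
    ext e
    simp only [Finset.mem_filter, Finset.mem_univ, true_and, Finset.mem_image, not_forall,
      ne_eq, not_not]
    exact ⟨fun ⟨j, hj⟩ => ⟨j, hj.symm⟩, fun ⟨j, hj⟩ => ⟨j, hj.symm⟩⟩
  rw [himg, Finset.sum_image (fun x _ y _ h => ha₂ h)]
  by_cases hv : v = u₂
  · rw [hv]
    have hS1 : (∑ e ∈ Finset.univ.filter (fun e : G₂.E => ∀ j, e ≠ a₂ j),
        (if f e ∈ C then G₂.inc u₂ e else 0)) = 0 := by
      apply Finset.sum_eq_zero
      intro e he
      rw [Finset.mem_filter] at he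
      rw [hz₂ e he.2]
      simp
    rw [hS1, zero_add]
    have ht : ∀ j : Fin 3, (if f (a₂ j) ∈ C then G₂.inc u₂ (a₂ j) else 0) =
        (if (id (Sum.inr j) : (J).E) ∈ C then 1 else 0) := by
      intro j; rw [hf2 j, h₂ j]
      rfl
    simp only [ht]
    exact matching_even G₁ G₂ u₁ u₂ a₁ a₂ h₁ h₂ hz₁ hz₂ C hC
  · have hC' := hC (Sum.inr ⟨v, hv⟩)
    rw [sum_mem_eq_sum_ite, sum_decomp G₁ G₂ u₁ u₂ a₁ a₂ h₁ h₂ hz₁ hz₂] at hC'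
    have hB : ∀ a : {e : G₁.E // ∀ j, e ≠ a₁ j},
        (J).inc (Sum.inr ⟨v, hv⟩) (Sum.inl (Sum.inl a)) = 0 := by
      intro a; simp [inc, threeJoin]
    have hM : ∀ j : Fin 3, (J).inc (Sum.inr ⟨v, hv⟩) (Sum.inr j) =
        if G₂.otherEnd u₂ (a₂ j) = v then 1 else 0 := by
      intro j; simp [inc, threeJoin, Subtype.ext_iff]
    have hA : ∀ b : {e : G₂.E // ∀ j, e ≠ a₂ j},
        (J).inc (Sum.inr ⟨v, hv⟩) (Sum.inl (Sum.inr b)) = G₂.inc v b.1 := by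
      intro b; simp [inc, threeJoin, Subtype.ext_iff]
    simp only [hB, hM, hA, ite_self, Finset.sum_const_zero, zero_add] at hC'
    have e1 : (∑ e ∈ Finset.univ.filter (fun e : G₂.E => ∀ j, e ≠ a₂ j),
        (if f e ∈ C then G₂.inc v e else 0)) =
        ∑ b : {e : G₂.E // ∀ j, e ≠ a₂ j},
          (if (id (Sum.inl (Sum.inr b)) : (J).E) ∈ C then G₂.inc v b.1 else 0) := by
      rw [Finset.sum_subtype (p := fun e : G₂.E => ∀ j, e ≠ a₂ j)
        (Finset.univ.filter (fun e : G₂.E => ∀ j, e ≠ a₂ j))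
        (by intro x; simp) (fun e => if f e ∈ C then G₂.inc v e else 0)]
      apply Finset.sum_congr rfl
      intro b _
      rw [hf1 b.1 b.2]
      rfl
    have e2 : ∀ j : Fin 3, (if f (a₂ j) ∈ C then G₂.inc v (a₂ j) else 0) =
        (if (id (Sum.inr j) : (J).E) ∈ C then
          (if G₂.otherEnd u₂ (a₂ j) = v then 1 else 0) else 0) := by
      intro j
      rw [hf2 j, inc_other hv (h₂ j)]
      rfl
    rw [e1]
    simp only [e2]
    exact hC'

end JT

end Multigraph
open Multigraph in
/-- if `G₁`, `G₂` are cc-incomparable snarks, then their 3-join has no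
cycle-continuous mapping to either of them. -/
theorem threeJoin_incomparable (G₁ G₂ : Multigraph) (u₁ : G₁.V) (u₂ : G₂.V)
    (a₁ : Fin 3 → G₁.E) (a₂ : Fin 3 → G₂.E)
    (ha₁ : Function.Injective a₁) (ha₂ : Function.Injective a₂)
    (h₁ : ∀ j, G₁.inc u₁ (a₁ j) = 1) (h₂ : ∀ j, G₂.inc u₂ (a₂ j) = 1)
    (hz₁ : ∀ e, (∀ j, e ≠ a₁ j) → G₁.inc u₁ e = 0)
    (hz₂ : ∀ e, (∀ j, e ≠ a₂ j) → G₂.inc u₂ e = 0)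
    (hn₁ : Function.Injective (fun j => G₁.otherEnd u₁ (a₁ j)))
    (hn₂ : Function.Injective (fun j => G₂.otherEnd u₂ (a₂ j)))
    (hs₁ : IsSnark G₁) (hs₂ : IsSnark G₂)
    (hinc₁ : ¬ ∃ f : G₁.E → G₂.E, CycleContinuous G₁ G₂ f)
    (hinc₂ : ¬ ∃ f : G₂.E → G₁.E, CycleContinuous G₂ G₁ f) :
    (¬ ∃ g : (threeJoin G₁ G₂ u₁ u₂ a₁ a₂ h₁ h₂ hz₁ hz₂).E → G₁.E,
        CycleContinuous (threeJoin G₁ G₂ u₁ u₂ a₁ a₂ h₁ h₂ hz₁ hz₂) G₁ g) ∧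
    (¬ ∃ g : (threeJoin G₁ G₂ u₁ u₂ a₁ a₂ h₁ h₂ hz₁ hz₂).E → G₂.E,
        CycleContinuous (threeJoin G₁ G₂ u₁ u₂ a₁ a₂ h₁ h₂ hz₁ hz₂) G₂ g) := by
  constructor
  · rintro ⟨g, hg⟩
    exact hinc₂ ⟨g ∘ threeJoinMapR G₁ G₂ u₁ u₂ a₁ a₂ h₁ h₂ hz₁ hz₂,
      cc_comp (mapR_cc G₁ G₂ u₁ u₂ a₁ a₂ h₁ h₂ hz₁ hz₂ ha₂) hg⟩
  · rintro ⟨g, hg⟩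
    exact hinc₁ ⟨g ∘ threeJoinMapL G₁ G₂ u₁ u₂ a₁ a₂ h₁ h₂ hz₁ hz₂,
      cc_comp (mapL_cc G₁ G₂ u₁ u₂ a₁ a₂ h₁ h₂ hz₁ hz₂ ha₁) hg⟩
end

section
/- If G is a graph, e ∈ E(G), and the graph obtained from G by deleting e admits a cycle-continuous mapping to K₂³, and H is any graph obtained from G − e by a sequence of 2-joins and 3-joins with graphs each admitting a cycle-continuous mapping to K₂³, then H admits a cycle-continuous mapping to K₂³. -/
namespace Multigraph

/-- `JoinClosure A H`: `H` is obtained from `A` by a sequence of 2-joins and 3-joins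
with graphs each admitting a cycle-continuous mapping to `K₂³`. -/
inductive JoinClosure : Multigraph → Multigraph → Prop
  | base (G : Multigraph) : JoinClosure G G
  | twoL (A G G' : Multigraph) (e : G.E) (e' : G'.E) :
      JoinClosure A G → (∃ f : G'.E → K23.E, CycleContinuous G' K23 f) →
      JoinClosure A (twoJoin G G' e e')
  | twoR (A G G' : Multigraph) (e' : G'.E) (e : G.E) :
      JoinClosure A G → (∃ f : G'.E → K23.E, CycleContinuous G' K23 f) →
      JoinClosure A (twoJoin G' G e' e)
  | threeL (A G G' : Multigraph) (u : G.V) (u' : G'.V)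
      (a : Fin 3 → G.E) (a' : Fin 3 → G'.E)
      (h : ∀ j, G.inc u (a j) = 1) (h' : ∀ j, G'.inc u' (a' j) = 1)
      (hz : ∀ e, (∀ j, e ≠ a j) → G.inc u e = 0)
      (hz' : ∀ e, (∀ j, e ≠ a' j) → G'.inc u' e = 0) :
      JoinClosure A G → (∃ f : G'.E → K23.E, CycleContinuous G' K23 f) →
      JoinClosure A (threeJoin G G' u u' a a' h h' hz hz')
  | threeR (A G G' : Multigraph) (u' : G'.V) (u : G.V)
      (a' : Fin 3 → G'.E) (a : Fin 3 → G.E)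
      (h' : ∀ j, G'.inc u' (a' j) = 1) (h : ∀ j, G.inc u (a j) = 1)
      (hz' : ∀ e, (∀ j, e ≠ a' j) → G'.inc u' e = 0)
      (hz : ∀ e, (∀ j, e ≠ a j) → G.inc u e = 0) :
      JoinClosure A G → (∃ f : G'.E → K23.E, CycleContinuous G' K23 f) →
      JoinClosure A (threeJoin G' G u' u a' a h' h hz' hz)

end Multigraph

namespace Multigraph

open Finset

lemma sum_split_pred {α : Type} [Fintype α] (p : α → Prop) [DecidablePred p] (g : α → ℕ) :
    ∑ x, g x = (∑ x : Subtype p, g x.1) + ∑ x ∈ Finset.univ.filter (fun x => ¬ p x), g x := by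
  rw [← Finset.sum_filter_add_sum_filter_not Finset.univ p g]
  congr 1
  exact Finset.sum_subtype _ (by simp) g

lemma sum_split_one {α : Type} [Fintype α] [DecidableEq α] (e : α) (g : α → ℕ) :
    ∑ x, g x = g e + ∑ x : {x // x ≠ e}, g x.1 := by
  rw [sum_split_pred (fun x => x ≠ e) g, add_comm]
  congr 1
  have : Finset.univ.filter (fun x => ¬ x ≠ e) = {e} := by
    ext x; simp
  rw [this, Finset.sum_singleton]

/-- The number of incidences of `v` with edges of color `i`. -/
def cCount (G : Multigraph) (f : G.E → Fin 3) (v : G.V) (i : Fin 3) : ℕ :=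
  ∑ e : G.E, if f e = i then G.inc v e else 0

lemma K23_inc (v : Bool) (e : Fin 3) : K23.inc v e = 1 := by
  cases v <;> simp [K23, inc]

lemma K23_isCycle_iff (C : Finset (Fin 3)) : K23.IsCycle C ↔ Even C.card := by
  constructor
  · intro h
    have := h false
    simpa [K23, inc] using this
  · intro h v
    cases v <;> simpa [K23, inc] using h

lemma preim_sum (G : Multigraph) (f : G.E → Fin 3) (v : G.V) (i₁ i₂ : Fin 3) (hne : i₁ ≠ i₂) :
    ∑ e ∈ preim f ({i₁, i₂} : Finset (Fin 3)), G.inc v e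
      = cCount G f v i₁ + cCount G f v i₂ := by
  unfold preim cCount
  rw [Finset.sum_filter, ← Finset.sum_add_distrib]
  apply Finset.sum_congr rfl
  intro e _
  by_cases h1 : f e = i₁ <;> by_cases h2 : f e = i₂ <;>
    simp_all [Finset.mem_insert]

lemma cc_iff (G : Multigraph) (f : G.E → Fin 3) :
    CycleContinuous G K23 f ↔
      ∀ v (i₁ i₂ : Fin 3), Even (cCount G f v i₁ + cCount G f v i₂) := by
  constructor
  · intro h v i₁ i₂
    by_cases hne : i₁ = i₂
    · subst hne; exact Even.add_self _
    · have hcyc : K23.IsCycle ({i₁, i₂} : Finset (Fin 3)) := by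
        rw [K23_isCycle_iff, Finset.card_pair hne]; decide
      have := h _ hcyc v
      erw [preim_sum G f v i₁ i₂ hne] at this; exact this
  · rintro h (C : Finset (Fin 3)) hC
    show ∀ v, Even (∑ e ∈ preim (β := Fin 3) f C, G.inc v e)
    rw [K23_isCycle_iff] at hC
    have hle : C.card ≤ 3 := by
      have := Finset.card_le_univ C
      simpa using this
    intro v
    interval_cases hcard : C.card
    · rw [Finset.card_eq_zero] at hcard
      subst hcard
      simp [preim]
    · simp [Nat.even_iff] at hC
    · obtain ⟨i₁, i₂, hne, rfl⟩ := Finset.card_eq_two.mp hcard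
      rw [preim_sum G f v i₁ i₂ hne]
      exact h v i₁ i₂
    · simp [Nat.even_iff] at hC

lemma cCount_perm (G : Multigraph) (f : G.E → Fin 3) (σ : Equiv.Perm (Fin 3))
    (v : G.V) (i : Fin 3) :
    cCount G (fun e => σ (f e)) v i = cCount G f v (σ.symm i) := by
  unfold cCount
  apply Finset.sum_congr rfl
  intro e _
  congr 1
  simp [Equiv.apply_eq_iff_eq_symm_apply]

lemma cc_perm (G : Multigraph) (f : G.E → Fin 3) (σ : Equiv.Perm (Fin 3))
    (h : CycleContinuous G K23 f) : CycleContinuous G K23 (fun e => σ (f e)) := by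
  rw [cc_iff] at h ⊢
  intro v i₁ i₂
  rw [cCount_perm, cCount_perm]
  exact h v _ _

end Multigraph

namespace Multigraph

open Finset

lemma twoJoin_cc (G G' : Multigraph) (e : G.E) (e' : G'.E)
    (h : ∃ f : G.E → K23.E, CycleContinuous G K23 f)
    (h' : ∃ f : G'.E → K23.E, CycleContinuous G' K23 f) :
    ∃ F : (twoJoin G G' e e').E → K23.E, CycleContinuous (twoJoin G G' e e') K23 F := by
  obtain ⟨(f : G.E → Fin 3), hf⟩ := h
  obtain ⟨(f' : G'.E → Fin 3), hf0⟩ := h'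
  set σ : Equiv.Perm (Fin 3) := Equiv.swap (f' e') (f e) with hσ
  set g' : G'.E → Fin 3 := fun b => σ (f' b) with hg'def
  have hg'cc : CycleContinuous G' K23 g' := cc_perm G' f' σ hf0
  have hg'e' : g' e' = f e := by
    rw [hg'def, hσ]; exact Equiv.swap_apply_left _ _
  refine ⟨(fun x => match x with
    | .inl (.inl a) => f a.1
    | .inl (.inr b) => g' b.1
    | .inr _ => f e : (twoJoin G G' e e').E → Fin 3), ?_⟩
  rw [cc_iff] at hf hg'cc ⊢
  intro V i₁ i₂
  have hL : ∀ v i, cCount (twoJoin G G' e e') (fun x => match x with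
      | .inl (.inl a) => f a.1
      | .inl (.inr b) => g' b.1
      | .inr _ => f e) (Sum.inl v) i = cCount G f v i := by
    intro v i
    unfold cCount
    rw [sum_split_one e (fun x => if f x = i then G.inc v x else 0)]
    erw [Fintype.sum_sum_type, Fintype.sum_sum_type, Fintype.sum_bool]
    simp only [inc, twoJoin, Sum.inl.injEq, Sum.inr.injEq, reduceCtorEq,
      if_false, ite_self, Finset.sum_const_zero, add_zero, zero_add]
    split_ifs <;> omega
  have hR : ∀ w i, cCount (twoJoin G G' e e') (fun x => match x with
      | .inl (.inl a) => f a.1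
      | .inl (.inr b) => g' b.1
      | .inr _ => f e) (Sum.inr w) i = cCount G' g' w i := by
    intro w i
    unfold cCount
    rw [sum_split_one e' (fun x => if g' x = i then G'.inc w x else 0)]
    erw [Fintype.sum_sum_type, Fintype.sum_sum_type, Fintype.sum_bool]
    simp only [inc, twoJoin, Sum.inl.injEq, Sum.inr.injEq, reduceCtorEq,
      if_false, ite_self, Finset.sum_const_zero, add_zero, zero_add, hg'e']
    split_ifs <;> omega
  match V with
  | .inl v =>
    have hev := hf v i₁ i₂
    rw [← hL v i₁, ← hL v i₂] at hev
    exact hev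
  | .inr w =>
    have hev := hg'cc w i₁ i₂
    rw [← hR w i₁, ← hR w i₂] at hev
    exact hev

end Multigraph

namespace Multigraph

open Finset

lemma fin3_cases : ∀ (j0 j1 j2 : Fin 3), j0 ≠ j1 → j0 ≠ j2 → j1 ≠ j2 →
    ∀ j, j = j0 ∨ j = j1 ∨ j = j2 := by decide

lemma fin3_third : ∀ j0 j1 : Fin 3, j0 ≠ j1 → ∃ j2, j2 ≠ j0 ∧ j2 ≠ j1 := by decide

lemma fin3_other : ∀ i0 : Fin 3, ∃ i1 i2, i0 ≠ i1 ∧ i0 ≠ i2 ∧ i1 ≠ i2 := by decide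

lemma fin3_two : ∀ x y : Fin 3, ∃ z, z ≠ x ∧ z ≠ y := by decide

lemma fin3_bij : ∀ j0 j1 j2 i0 i1 i2 : Fin 3, j0 ≠ j1 → j0 ≠ j2 → j1 ≠ j2 →
    i0 ≠ i1 → i0 ≠ i2 → i1 ≠ i2 →
    Function.Bijective (fun j => if j = j2 then i0 else if j = j0 then i1 else i2) := by decide

def xv (G : Multigraph) (u : G.V) (e : G.E) (v : G.V) : ℕ :=
  if G.otherEnd u e = v then 1 else 0

def Snew (G : Multigraph) (u : G.V) (a : Fin 3 → G.E) (c : Fin 3 → Fin 3)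
    (v : G.V) (i : Fin 3) : ℕ :=
  ∑ j : Fin 3, if c j = i then xv G u (a j) v else 0

def Sold (G : Multigraph) (a : Fin 3 → G.E) (g : G.E → Fin 3) (v : G.V) (i : Fin 3) : ℕ :=
  ∑ e ∈ Finset.univ.filter (fun e => ¬ ∀ j, e ≠ a j), if g e = i then G.inc v e else 0

lemma inc_eq_xv (G : Multigraph) (u : G.V) (e : G.E) (v : G.V)
    (h1 : G.inc u e = 1) (hv : v ≠ u) : G.inc v e = xv G u e v := by
  unfold inc at h1
  unfold xv otherEnd inc
  split_ifs at h1 ⊢ <;> simp_all <;> omega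

lemma side_lemma (G : Multigraph) (u : G.V) (a : Fin 3 → G.E) (f : G.E → Fin 3)
    (h : ∀ j, G.inc u (a j) = 1) (hz : ∀ e, (∀ j, e ≠ a j) → G.inc u e = 0)
    (hcc : ∀ v (i₁ i₂ : Fin 3), Even (cCount G f v i₁ + cCount G f v i₂)) :
    ∃ c : Fin 3 → Fin 3, Function.Bijective c ∧
      ∀ ρ : Equiv.Perm (Fin 3), ∀ v, v ≠ u → ∀ i₁ i₂ : Fin 3,
        (Snew G u a (fun j => ρ (c j)) v i₁ + Sold G a (fun e => ρ (f e)) v i₁) % 2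
          = (Snew G u a (fun j => ρ (c j)) v i₂ + Sold G a (fun e => ρ (f e)) v i₂) % 2 := by
  have hmem : ∀ e, e ∈ Finset.univ.filter (fun e => ¬ ∀ j, e ≠ a j) ↔ ∃ j, e = a j := by
    intro e; simp [not_forall]
  have hn : ∀ i, cCount G f u i
      = ∑ e ∈ Finset.univ.filter (fun e => ¬ ∀ j, e ≠ a j), (if f e = i then 1 else 0) := by
    intro i
    unfold cCount
    rw [sum_split_pred (fun e => ∀ j, e ≠ a j)]
    have h1 : (∑ x : {e // ∀ j, e ≠ a j}, if f x.1 = i then G.inc u x.1 else 0) = 0 :=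
      Finset.sum_eq_zero (fun x _ => by rw [hz x.1 x.2]; simp)
    rw [h1, zero_add]
    apply Finset.sum_congr rfl
    intro e he
    obtain ⟨j, rfl⟩ := (hmem e).mp he
    rw [h j]
  by_cases hdup : ∃ j k : Fin 3, j ≠ k ∧ a j = a k
  · -- degenerate case: two of the three edges coincide
    obtain ⟨j0, j1, hj01, haj⟩ := hdup
    obtain ⟨j2, hj20, hj21⟩ := fin3_third j0 j1 hj01
    have cover_j := fin3_cases j0 j1 j2 hj01 (Ne.symm hj20) (Ne.symm hj21)
    have hne20 : a j2 ≠ a j0 := by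
      intro heq
      have hS : Finset.univ.filter (fun e => ¬ ∀ j, e ≠ a j) = {a j0} := by
        ext e
        rw [hmem, Finset.mem_singleton]
        constructor
        · rintro ⟨j, rfl⟩
          rcases cover_j j with rfl | rfl | rfl
          · rfl
          · exact haj.symm
          · exact heq
        · intro he; exact ⟨j0, he⟩
      obtain ⟨i', hi'⟩ : ∃ i', i' ≠ f (a j0) := by
        obtain ⟨z, hz1, _⟩ := fin3_two (f (a j0)) (f (a j0)); exact ⟨z, hz1⟩
      have hv0 : cCount G f u (f (a j0)) = 1 := by rw [hn, hS, Finset.sum_singleton]; simp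
      have hv1 : cCount G f u i' = 0 := by
        rw [hn, hS, Finset.sum_singleton]; simp [Ne.symm hi']
      have hev := hcc u (f (a j0)) i'
      rw [hv0, hv1] at hev
      simp [Nat.even_iff] at hev
    have hS2 : Finset.univ.filter (fun e => ¬ ∀ j, e ≠ a j) = {a j0, a j2} := by
      ext e
      rw [hmem, Finset.mem_insert, Finset.mem_singleton]
      constructor
      · rintro ⟨j, rfl⟩
        rcases cover_j j with rfl | rfl | rfl
        · exact Or.inl rfl
        · exact Or.inl haj.symm
        · exact Or.inr rfl
      · rintro (he | he)
        · exact ⟨j0, he⟩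
        · exact ⟨j2, he⟩
    have hval2 : ∀ i, cCount G f u i
        = (if f (a j0) = i then 1 else 0) + (if f (a j2) = i then 1 else 0) := by
      intro i
      rw [hn, hS2, Finset.sum_pair (Ne.symm hne20)]
    have hcol : f (a j2) = f (a j0) := by
      by_contra hcne
      obtain ⟨i', hi'0, hi'2⟩ := fin3_two (f (a j0)) (f (a j2))
      have hev := hcc u (f (a j0)) i'
      rw [hval2, hval2] at hev
      have e1 : f (a j2) ≠ f (a j0) := hcne
      simp [e1, Ne.symm hi'0, Ne.symm hi'2, Nat.even_iff] at hev
    obtain ⟨i1, i2, hi01, hi02, hi12⟩ := fin3_other (f (a j0))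
    refine ⟨fun j => if j = j2 then f (a j0) else if j = j0 then i1 else i2,
      fin3_bij j0 j1 j2 (f (a j0)) i1 i2 hj01 (Ne.symm hj20) (Ne.symm hj21) hi01 hi02 hi12, ?_⟩
    intro ρ v hv i₁ i₂
    have hx1 : xv G u (a j1) v = xv G u (a j0) v := by rw [← haj]
    have huniv : (Finset.univ : Finset (Fin 3)) = {j0, j1, j2} := by
      ext j; simpa using cover_j j
    have hc0 : (if j0 = j2 then f (a j0) else if j0 = j0 then i1 else i2) = i1 := by
      simp [Ne.symm hj20]
    have hc1 : (if j1 = j2 then f (a j0) else if j1 = j0 then i1 else i2) = i2 := by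
      simp [Ne.symm hj21, Ne.symm hj01]
    have hc2 : (if j2 = j2 then f (a j0) else if j2 = j0 then i1 else i2) = f (a j0) := by
      simp
    have hSnew : ∀ i, Snew G u a
        (fun j => ρ (if j = j2 then f (a j0) else if j = j0 then i1 else i2)) v i
        = (if ρ i1 = i then xv G u (a j0) v else 0)
          + (if ρ i2 = i then xv G u (a j0) v else 0)
          + (if ρ (f (a j0)) = i then xv G u (a j2) v else 0) := by
      intro i
      unfold Snew
      rw [huniv, Finset.sum_insert (by simp [hj01, Ne.symm hj20]),
        Finset.sum_insert (by simp [Ne.symm hj21]), Finset.sum_singleton]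
      beta_reduce
      rw [hc0, hc1, hc2, hx1]
      ring
    have hSold : ∀ i, Sold G a (fun e => ρ (f e)) v i
        = (if ρ (f (a j0)) = i then xv G u (a j0) v else 0)
          + (if ρ (f (a j0)) = i then xv G u (a j2) v else 0) := by
      intro i
      unfold Sold
      rw [hS2, Finset.sum_pair (Ne.symm hne20)]
      beta_reduce
      rw [hcol, inc_eq_xv G u (a j0) v (h j0) hv, inc_eq_xv G u (a j2) v (h j2) hv]
    have hcov : ∀ i : Fin 3, i = ρ (f (a j0)) ∨ i = ρ i1 ∨ i = ρ i2 := by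
      intro i
      rcases fin3_cases (f (a j0)) i1 i2 hi01 hi02 hi12 (ρ.symm i) with hh | hh | hh
      · exact Or.inl ((Equiv.symm_apply_eq ρ).mp hh)
      · exact Or.inr (Or.inl ((Equiv.symm_apply_eq ρ).mp hh))
      · exact Or.inr (Or.inr ((Equiv.symm_apply_eq ρ).mp hh))
    rw [hSnew, hSnew, hSold, hSold]
    rcases hcov i₁ with h1 | h1 | h1 <;> rcases hcov i₂ with h2 | h2 | h2 <;>
      subst h1 <;> subst h2 <;>
      simp [EmbeddingLike.apply_eq_iff_eq, hi01, hi02, hi12,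
        Ne.symm hi01, Ne.symm hi02, Ne.symm hi12] <;> omega
  · -- non-degenerate case: the three edges are distinct
    push_neg at hdup
    have hd01 : a 0 ≠ a 1 := hdup 0 1 (by decide)
    have hd02 : a 0 ≠ a 2 := hdup 0 2 (by decide)
    have hd12 : a 1 ≠ a 2 := hdup 1 2 (by decide)
    have hS3 : Finset.univ.filter (fun e => ¬ ∀ j, e ≠ a j) = {a 0, a 1, a 2} := by
      ext e
      rw [hmem]
      simp only [Finset.mem_insert, Finset.mem_singleton]
      constructor
      · rintro ⟨j, rfl⟩
        rcases fin3_cases 0 1 2 (by decide) (by decide) (by decide) j with rfl | rfl | rfl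
        · exact Or.inl rfl
        · exact Or.inr (Or.inl rfl)
        · exact Or.inr (Or.inr rfl)
      · rintro (he | he | he)
        exacts [⟨0, he⟩, ⟨1, he⟩, ⟨2, he⟩]
    have hval3 : ∀ i, cCount G f u i
        = (if f (a 0) = i then 1 else 0) + (if f (a 1) = i then 1 else 0)
          + (if f (a 2) = i then 1 else 0) := by
      intro i
      rw [hn, hS3, Finset.sum_insert (by simp [hd01, hd02]),
        Finset.sum_insert (by simp [hd12]), Finset.sum_singleton]
      ring
    have hone : ∀ i, cCount G f u i = 1 := by
      have e01 := hcc u 0 1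
      have e02 := hcc u 0 2
      have e12 := hcc u 1 2
      have hsum : cCount G f u 0 + cCount G f u 1 + cCount G f u 2 = 3 := by
        rw [hval3, hval3, hval3]
        have : ∀ x : Fin 3, ((if x = 0 then (1:ℕ) else 0) + (if x = 1 then 1 else 0)
            + (if x = 2 then 1 else 0)) = 1 := by decide
        have t0 := this (f (a 0)); have t1 := this (f (a 1)); have t2 := this (f (a 2))
        omega
      intro i
      rcases fin3_cases 0 1 2 (by decide) (by decide) (by decide) i with rfl | rfl | rfl <;>
        · rw [Nat.even_iff] at e01 e02 e12; omega
    have hfinj : ∀ j k : Fin 3, f (a j) = f (a k) → j = k := by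
      intro j k hfjk
      by_contra hne
      have hx : (if f (a 0) = f (a j) then (1:ℕ) else 0)
          + (if f (a 1) = f (a j) then 1 else 0)
          + (if f (a 2) = f (a j) then 1 else 0) = 1 :=
        (hval3 (f (a j))).symm.trans (hone (f (a j)))
      fin_cases j <;> fin_cases k <;> simp_all <;> split_ifs at hx <;> omega
    refine ⟨fun j => f (a j), ?_, ?_⟩
    · exact Finite.injective_iff_bijective.mp
        (fun j k hjk => hfinj j k hjk)
    · intro ρ v hv i₁ i₂
      have key : ∀ i, Snew G u a (fun j => ρ (f (a j))) v i
          = Sold G a (fun e => ρ (f e)) v i := by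
        intro i
        unfold Snew Sold
        rw [hS3, Finset.sum_insert (by simp [hd01, hd02]),
          Finset.sum_insert (by simp [hd12]), Finset.sum_singleton,
          inc_eq_xv G u (a 0) v (h 0) hv, inc_eq_xv G u (a 1) v (h 1) hv,
          inc_eq_xv G u (a 2) v (h 2) hv, Fin.sum_univ_three]
        beta_reduce
        ring
      rw [key, key]
      omega

end Multigraph

namespace Multigraph

open Finset

lemma threeJoin_cc (G G' : Multigraph) (u : G.V) (u' : G'.V)
    (a : Fin 3 → G.E) (a' : Fin 3 → G'.E)
    (h : ∀ j, G.inc u (a j) = 1) (h' : ∀ j, G'.inc u' (a' j) = 1)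
    (hz : ∀ e, (∀ j, e ≠ a j) → G.inc u e = 0)
    (hz' : ∀ e, (∀ j, e ≠ a' j) → G'.inc u' e = 0)
    (hG : ∃ f : G.E → K23.E, CycleContinuous G K23 f)
    (hG' : ∃ f : G'.E → K23.E, CycleContinuous G' K23 f) :
    ∃ F : (threeJoin G G' u u' a a' h h' hz hz').E → K23.E,
      CycleContinuous (threeJoin G G' u u' a a' h h' hz hz') K23 F := by
  obtain ⟨(f : G.E → Fin 3), hf⟩ := hG
  obtain ⟨(f' : G'.E → Fin 3), hf'⟩ := hG'
  rw [cc_iff] at hf hf'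
  obtain ⟨c, hcbij, hcgood⟩ := side_lemma G u a f h hz hf
  obtain ⟨c', hc'bij, hc'good⟩ := side_lemma G' u' a' f' h' hz' hf'
  set cE := Equiv.ofBijective c hcbij with hcE
  set c'E := Equiv.ofBijective c' hc'bij with hc'E
  set ρ : Equiv.Perm (Fin 3) := c'E.symm.trans cE with hρ
  have hρc' : ∀ j, ρ (c' j) = c j := by
    intro j
    have h1 : c'E.symm (c' j) = j := by
      rw [Equiv.symm_apply_eq]; rfl
    show cE (c'E.symm (c' j)) = c j
    rw [h1]; rfl
  refine ⟨(fun x => match x with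
    | .inl (.inl aa) => f aa.1
    | .inl (.inr bb) => ρ (f' bb.1)
    | .inr j => c j : (threeJoin G G' u u' a a' h h' hz hz').E → Fin 3), ?_⟩
  rw [cc_iff]
  have hL : ∀ (vv : {v : G.V // v ≠ u}) (i : Fin 3),
      cCount (threeJoin G G' u u' a a' h h' hz hz') (fun x => match x with
        | .inl (.inl aa) => f aa.1
        | .inl (.inr bb) => ρ (f' bb.1)
        | .inr j => c j) (Sum.inl vv) i
      = (∑ x : {e : G.E // ∀ j, e ≠ a j}, if f x.1 = i then G.inc vv.1 x.1 else 0)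
        + Snew G u a c vv.1 i := by
    rintro ⟨v, hv⟩ i
    unfold cCount Snew xv
    erw [Fintype.sum_sum_type, Fintype.sum_sum_type]
    simp only [inc, threeJoin, Sum.inl.injEq, Sum.inr.injEq, Subtype.mk.injEq, reduceCtorEq,
      if_false, ite_self, Finset.sum_const_zero, add_zero, zero_add]
  have hR : ∀ (ww : {w : G'.V // w ≠ u'}) (i : Fin 3),
      cCount (threeJoin G G' u u' a a' h h' hz hz') (fun x => match x with
        | .inl (.inl aa) => f aa.1
        | .inl (.inr bb) => ρ (f' bb.1)
        | .inr j => c j) (Sum.inr ww) i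
      = (∑ x : {e : G'.E // ∀ j, e ≠ a' j}, if ρ (f' x.1) = i then G'.inc ww.1 x.1 else 0)
        + Snew G' u' a' c ww.1 i := by
    rintro ⟨w, hw⟩ i
    unfold cCount Snew xv
    erw [Fintype.sum_sum_type, Fintype.sum_sum_type]
    simp only [inc, threeJoin, Sum.inl.injEq, Sum.inr.injEq, Subtype.mk.injEq, reduceCtorEq,
      if_false, ite_self, Finset.sum_const_zero, add_zero, zero_add]
  intro V i₁ i₂
  match V with
  | .inl vv =>
    obtain ⟨v, hv⟩ := vv
    have hL1 := hL ⟨v, hv⟩ i₁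
    have hL2 := hL ⟨v, hv⟩ i₂
    have e1 := hf v i₁ i₂
    have e2 : (Snew G u a c v i₁ + Sold G a f v i₁) % 2
        = (Snew G u a c v i₂ + Sold G a f v i₂) % 2 :=
      hcgood (Equiv.refl _) v hv i₁ i₂
    have splitL : ∀ i, cCount G f v i
        = (∑ x : {e : G.E // ∀ j, e ≠ a j}, if f x.1 = i then G.inc v x.1 else 0)
          + Sold G a f v i := by
      intro i; unfold cCount Sold; exact sum_split_pred _ _
    rw [splitL i₁, splitL i₂] at e1
    have hev : Even
        (((∑ x : {e : G.E // ∀ j, e ≠ a j}, if f x.1 = i₁ then G.inc v x.1 else 0)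
            + Snew G u a c v i₁)
          + ((∑ x : {e : G.E // ∀ j, e ≠ a j}, if f x.1 = i₂ then G.inc v x.1 else 0)
            + Snew G u a c v i₂)) := by
      rw [Nat.even_iff] at e1 ⊢
      omega
    rw [← hL1, ← hL2] at hev
    exact hev
  | .inr ww =>
    obtain ⟨w, hw⟩ := ww
    have hR1 := hR ⟨w, hw⟩ i₁
    have hR2 := hR ⟨w, hw⟩ i₂
    have e1 : Even (cCount G' (fun e => ρ (f' e)) w i₁
        + cCount G' (fun e => ρ (f' e)) w i₂) := by
      rw [cCount_perm, cCount_perm]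
      exact hf' w _ _
    have e2 : (Snew G' u' a' c w i₁ + Sold G' a' (fun e => ρ (f' e)) w i₁) % 2
        = (Snew G' u' a' c w i₂ + Sold G' a' (fun e => ρ (f' e)) w i₂) % 2 := by
      have hfc : (fun j => ρ (c' j)) = c := funext hρc'
      have e2' := hc'good ρ w hw i₁ i₂
      rwa [hfc] at e2'
    have splitR : ∀ i, cCount G' (fun e => ρ (f' e)) w i
        = (∑ x : {e : G'.E // ∀ j, e ≠ a' j}, if ρ (f' x.1) = i then G'.inc w x.1 else 0)
          + Sold G' a' (fun e => ρ (f' e)) w i := by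
      intro i; unfold cCount Sold; exact sum_split_pred _ _
    rw [splitR i₁, splitR i₂] at e1
    have hev : Even
        (((∑ x : {e : G'.E // ∀ j, e ≠ a' j}, if ρ (f' x.1) = i₁ then G'.inc w x.1 else 0)
            + Snew G' u' a' c w i₁)
          + ((∑ x : {e : G'.E // ∀ j, e ≠ a' j}, if ρ (f' x.1) = i₂ then G'.inc w x.1 else 0)
            + Snew G' u' a' c w i₂)) := by
      rw [Nat.even_iff] at e1 ⊢
      omega
    rw [← hR1, ← hR2] at hev
    exact hev

end Multigraph

open Multigraph in
/-- if `G − e` admits a cycle-continuous mapping to `K₂³` and `H` is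
obtained from `G − e` by a sequence of 2-joins and 3-joins with graphs admitting
cycle-continuous mappings to `K₂³`, then so does `H`. -/
theorem joinClosure_cc_K23 (G : Multigraph) (e : G.E)
    (hGe : ∃ f : (G.deleteEdge e).E → K23.E, CycleContinuous (G.deleteEdge e) K23 f)
    (H : Multigraph) (hH : JoinClosure (G.deleteEdge e) H) :
    ∃ f : H.E → K23.E, CycleContinuous H K23 f := by
  induction hH
  case base => exact hGe
  case twoL G1 G1' e1 e1' hJC hcc ih => exact twoJoin_cc G1 G1' e1 e1' ih hcc
  case twoR G1 G1' e1' e1 hJC hcc ih => exact twoJoin_cc G1' G1 e1' e1 hcc ih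
  case threeL G1 G1' u1 u1' a1 a1' hh hh' hhz hhz' hJC hcc ih =>
    exact threeJoin_cc G1 G1' u1 u1' a1 a1' hh hh' hhz hhz' ih hcc
  case threeR G1 G1' u1' u1 a1' a1 hh' hh hhz' hhz hJC hcc ih =>
    exact threeJoin_cc G1' G1 u1' u1 a1' a1 hh' hh hhz' hhz hcc ih
end
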